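/- arXiv:2302.13128 — 12 statements merged into one kernel-verified Lean document; each statement's English description precedes it below -/
import Mathlib

section
/- Let T : H ⇉ H be a set-valued operator and Σ : H → H a linear invertible operator such that the resolvents J_{Σ⁻¹T} := (I + Σ⁻¹T)⁻¹ and J_{ΣT⁻¹} := (I + ΣT⁻¹)⁻¹ are everywhere defined and single-valued. Then for all x ∈ H, J_{ΣT⁻¹}(x) = x − Σ J_{Σ⁻¹T}(Σ⁻¹x). -/
/-- Generalized Moreau decomposition: J_{Σ T⁻¹}(x) = x − Σ J_{Σ⁻¹T}(Σ⁻¹ x). -/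
theorem stmt1 {H : Type} [NormedAddCommGroup H] [InnerProductSpace ℝ H]
    (T : H → Set H) (e : H ≃ₗ[ℝ] H)
    (J₁ J₂ : H → H)
    -- J₁ = J_{Σ⁻¹T} is everywhere defined and single-valued:
    -- v = J₁ x  ⇔  x − v ∈ Σ⁻¹T(v)  ⇔  Σ(x − v) ∈ T(v)
    (hJ₁ : ∀ x v : H, e (x - v) ∈ T v ↔ v = J₁ x)
    -- J₂ = J_{Σ T⁻¹} is everywhere defined and single-valued:
    -- w = J₂ x  ⇔  x − w ∈ Σ T⁻¹(w)  ⇔  Σ⁻¹(x − w) ∈ T⁻¹(w)  ⇔  w ∈ T(Σ⁻¹(x − w))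
    (hJ₂ : ∀ x w : H, w ∈ T (e.symm (x - w)) ↔ w = J₂ x) :
    ∀ x : H, J₂ x = x - e (J₁ (e.symm x)) := by
  intro x
  set v := J₁ (e.symm x) with hv
  have h1 : e (e.symm x - v) ∈ T v := (hJ₁ (e.symm x) v).mpr hv
  have h2 : e (e.symm x - v) = x - e v := by
    rw [map_sub, e.apply_symm_apply]
  have h3 : (x - e v) ∈ T (e.symm (x - (x - e v))) := by
    simpa [h2] using h1
  exact ((hJ₂ x (x - e v)).mp h3).symm
end

section
/- Let M : H → H be a bounded linear self-adjoint positive semi-definite operator that is an admissible preconditioner for T : H ⇉ H (i.e., J := (M+T)⁻¹M is single-valued with full domain). If M⁻¹T is M-monotone, then J is M-firmly non-expansive: for all u₁, u₂ ∈ H, ‖Ju₁ − Ju₂‖²_M + ‖(u₁ − Ju₁) − (u₂ − Ju₂)‖²_M ≤ ‖u₁ − u₂‖²_M. -/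
open scoped InnerProductSpace

/-- If M⁻¹T is M-monotone, the preconditioned resolvent J = (M+T)⁻¹M is M-firmly
non-expansive. -/
theorem stmt2 {H : Type} [NormedAddCommGroup H] [InnerProductSpace ℝ H] [CompleteSpace H]
    (M : H →L[ℝ] H) (hsa : IsSelfAdjoint M) (hpsd : ∀ x : H, 0 ≤ ⟪M x, x⟫_ℝ)
    (T : H → Set H) (J : H → H)
    -- J = (M+T)⁻¹M has full domain:  M x ∈ (M + T)(J x)
    (hJ : ∀ x : H, M x - M (J x) ∈ T (J x))
    -- and is single-valued:
    (hJuniq : ∀ x v : H, M x - M v ∈ T v → v = J x)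
    -- M⁻¹T is M-monotone:
    (hmono : ∀ u₁ v₁ u₂ v₂ : H, M v₁ ∈ T u₁ → M v₂ ∈ T u₂ →
      0 ≤ ⟪M (u₁ - u₂), v₁ - v₂⟫_ℝ) :
    ∀ u₁ u₂ : H,
      ⟪M (J u₁ - J u₂), J u₁ - J u₂⟫_ℝ +
        ⟪M ((u₁ - J u₁) - (u₂ - J u₂)), (u₁ - J u₁) - (u₂ - J u₂)⟫_ℝ ≤
      ⟪M (u₁ - u₂), u₁ - u₂⟫_ℝ := by
  intro u₁ u₂
  set p := J u₁ - J u₂ with hp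
  set q := (u₁ - J u₁) - (u₂ - J u₂) with hq
  have h1 : M (u₁ - J u₁) ∈ T (J u₁) := by simpa [map_sub] using hJ u₁
  have h2 : M (u₂ - J u₂) ∈ T (J u₂) := by simpa [map_sub] using hJ u₂
  have hcross : 0 ≤ ⟪M p, q⟫_ℝ := hmono _ _ _ _ h1 h2
  have hsum : u₁ - u₂ = p + q := by rw [hp, hq]; abel
  have hsym : ⟪M q, p⟫_ℝ = ⟪M p, q⟫_ℝ := by
    exact (hsa.isSymmetric q p).trans (real_inner_comm _ _)
  rw [hsum]
  have hexp : ⟪M (p + q), p + q⟫_ℝ =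
      ⟪M p, p⟫_ℝ + ⟪M p, q⟫_ℝ + ⟪M q, p⟫_ℝ + ⟪M q, q⟫_ℝ := by
    simp [map_add, inner_add_add_self, inner_add_left, inner_add_right]
    ring
  rw [hexp, hsym]
  linarith
end

section
/- Let (α_k), (β_k), (m_k) be sequences of non-negative reals with ∑_k m_k < ∞. If α_{k+1} ≤ (1 + m_k)α_k − β_k for all k, then (α_k) converges and ∑_k β_k < ∞. -/
/-- Quasi-Fejér type lemma: if α_{k+1} ≤ (1+m_k)α_k − β_k with nonnegative sequences and
∑ m_k < ∞, then (α_k) converges and ∑ β_k < ∞. -/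
theorem stmt3 (α β m : ℕ → ℝ)
    (hα : ∀ k, 0 ≤ α k) (hβ : ∀ k, 0 ≤ β k) (hm : ∀ k, 0 ≤ m k)
    (hsum : Summable m)
    (hrec : ∀ k, α (k + 1) ≤ (1 + m k) * α k - β k) :
    (∃ l : ℝ, Filter.Tendsto α Filter.atTop (nhds l)) ∧ Summable β := by
  set P : ℕ → ℝ := fun n => ∏ j ∈ Finset.range n, (1 + m j) with hPdef
  have hPsucc : ∀ n, P (n + 1) = P n * (1 + m n) := by
    intro n; simp [hPdef, Finset.prod_range_succ]
  have hP1 : ∀ n, 1 ≤ P n := by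
    intro n
    induction n with
    | zero => simp [hPdef]
    | succ k ih => rw [hPsucc k]; nlinarith [hm k]
  have hPpos : ∀ n, 0 < P n := fun n => lt_of_lt_of_le one_pos (hP1 n)
  have hPbd : ∀ n, P n ≤ Real.exp (∑' k, m k) := by
    intro n
    have h1 : P n ≤ ∏ j ∈ Finset.range n, Real.exp (m j) := by
      apply Finset.prod_le_prod
      · intro j _; linarith [hm j]
      · intro j _; rw [add_comm]; exact Real.add_one_le_exp (m j)
    rw [← Real.exp_sum] at h1
    refine h1.trans (Real.exp_le_exp.2 ?_)
    exact Summable.sum_le_tsum _ (fun j _ => hm j) hsum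
  set g : ℕ → ℝ := fun n => α n / P n with hgdef
  have hgstep : ∀ n, g (n + 1) ≤ g n - β n / P (n + 1) := by
    intro n
    have hp1 := hPpos (n + 1)
    have hdiv : α (n + 1) / P (n + 1) ≤ ((1 + m n) * α n - β n) / P (n + 1) :=
      div_le_div_of_nonneg_right (hrec n) hp1.le |>.trans_eq rfl
    have : ((1 + m n) * α n - β n) / P (n + 1) = α n / P n - β n / P (n + 1) := by
      have hne : (1:ℝ) + m n ≠ 0 := by nlinarith [hm n]
      rw [hPsucc n, sub_div, mul_comm (1 + m n) (α n), mul_comm (P n) (1 + m n),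
        mul_comm (1 + m n) (P n), mul_div_mul_right (α n) (P n) hne]
    simpa [hgdef, this] using hdiv
  have hganti : Antitone g := by
    apply antitone_nat_of_succ_le
    intro n
    have := hgstep n
    have h0 : 0 ≤ β n / P (n + 1) := div_nonneg (hβ n) (hPpos (n + 1)).le
    linarith
  have hgnn : ∀ n, 0 ≤ g n := fun n => div_nonneg (hα n) (hPpos n).le
  have hgbdd : BddBelow (Set.range g) := ⟨0, by rintro x ⟨n, rfl⟩; exact hgnn n⟩
  have hgconv : Filter.Tendsto g Filter.atTop (nhds (⨅ n, g n)) :=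
    tendsto_atTop_ciInf hganti hgbdd
  have hPmono : Monotone P := by
    apply monotone_nat_of_le_succ
    intro n
    rw [hPsucc n]
    nlinarith [hPpos n, hm n]
  have hPbdd : BddAbove (Set.range P) :=
    ⟨Real.exp (∑' k, m k), by rintro x ⟨n, rfl⟩; exact hPbd n⟩
  have hPconv : Filter.Tendsto P Filter.atTop (nhds (⨆ n, P n)) :=
    tendsto_atTop_ciSup hPmono hPbdd
  constructor
  · refine ⟨(⨅ n, g n) * (⨆ n, P n), ?_⟩
    have := hgconv.mul hPconv
    have heq : ∀ n, g n * P n = α n := fun n => div_mul_cancel₀ _ (hPpos n).ne'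
    simpa [heq] using this
  · apply summable_of_sum_range_le (c := Real.exp (∑' k, m k) * g 0) hβ
    intro n
    have hterm : ∀ k, β k ≤ Real.exp (∑' j, m j) * (g k - g (k + 1)) := by
      intro k
      have h1 : β k / P (k + 1) ≤ g k - g (k + 1) := by linarith [hgstep k]
      have h2 : β k = P (k + 1) * (β k / P (k + 1)) := by
        field_simp
        rw [mul_div_assoc, div_self (hPpos (k + 1)).ne', mul_one]
      rw [h2]
      apply mul_le_mul (hPbd (k + 1)) h1 (div_nonneg (hβ k) (hPpos (k + 1)).le)
        (Real.exp_pos _).le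
    calc ∑ k ∈ Finset.range n, β k
        ≤ ∑ k ∈ Finset.range n, Real.exp (∑' j, m j) * (g k - g (k + 1)) :=
          Finset.sum_le_sum (fun k _ => hterm k)
      _ = Real.exp (∑' j, m j) * (g 0 - g n) := by
          rw [← Finset.mul_sum, Finset.sum_range_sub']
      _ ≤ Real.exp (∑' j, m j) * g 0 := by
          have := hgnn n
          nlinarith [Real.exp_pos (∑' j, m j)]
end

section
/- Let M : H → H be a bounded linear self-adjoint positive semi-definite operator with decomposition M = CC* (C bounded, injective), T : H ⇉ H such that (M+T)⁻¹ is L-Lipschitz and J := (M+T)⁻¹M is single-valued with full domain. Then for all u, ũ ∈ H, ‖Ju − Jũ‖ ≤ L √(‖M‖) ‖u − ũ‖_M. -/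
open scoped InnerProductSpace

/-- If (M+T)⁻¹ is L-Lipschitz and M = CC* then J = (M+T)⁻¹M satisfies
‖Ju − Jv‖ ≤ L √‖M‖ ‖u − v‖_M. -/
theorem stmt4 {H D : Type} [NormedAddCommGroup H] [InnerProductSpace ℝ H] [CompleteSpace H]
    [NormedAddCommGroup D] [InnerProductSpace ℝ D] [CompleteSpace D]
    (M : H →L[ℝ] H) (hsa : IsSelfAdjoint M) (hpsd : ∀ x : H, 0 ≤ ⟪M x, x⟫_ℝ)
    (C : D →L[ℝ] H) (hCinj : Function.Injective C)
    (hdec : M = C.comp (ContinuousLinearMap.adjoint C))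
    (T : H → Set H) (L : ℝ)
    -- (M+T)⁻¹ is L-Lipschitz on its graph: y ∈ (M+T)⁻¹ x  ⇔  x − M y ∈ T y
    (hLip : ∀ x₁ x₂ y₁ y₂ : H, x₁ - M y₁ ∈ T y₁ → x₂ - M y₂ ∈ T y₂ →
      ‖y₁ - y₂‖ ≤ L * ‖x₁ - x₂‖)
    (J : H → H)
    -- J = (M+T)⁻¹M is single-valued with full domain:
    (hJ : ∀ x : H, M x - M (J x) ∈ T (J x)) :
    ∀ u v : H, ‖J u - J v‖ ≤ L * Real.sqrt ‖M‖ * Real.sqrt ⟪M (u - v), u - v⟫_ℝ := by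
  intro u v
  set Cs := ContinuousLinearMap.adjoint C with hCs
  -- key: ⟪M x, x⟫ = ‖C* x‖²
  have hinner : ∀ x : H, ⟪M x, x⟫_ℝ = ‖Cs x‖ ^ 2 := by
    intro x
    rw [hdec]
    simp only [ContinuousLinearMap.comp_apply]
    have hC : C = ContinuousLinearMap.adjoint Cs := (ContinuousLinearMap.adjoint_adjoint C).symm
    rw [hC, ContinuousLinearMap.adjoint_inner_left, real_inner_self_eq_norm_sq]
  -- ‖M‖ = ‖C‖²
  have hnormM : ‖M‖ = ‖C‖ * ‖C‖ := by
    have := ContinuousLinearMap.norm_adjoint_comp_self Cs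
    rw [ContinuousLinearMap.adjoint_adjoint] at this
    have hC : ‖Cs‖ = ‖C‖ := LinearIsometryEquiv.norm_map _ C
    rw [hC] at this
    rw [hdec]
    exact this
  have hsqrtM : Real.sqrt ‖M‖ = ‖C‖ := by
    rw [hnormM, Real.sqrt_mul_self (norm_nonneg C)]
  -- ‖M x‖ ≤ √‖M‖ * √⟪M x, x⟫
  have hMx : ∀ x : H, ‖M x‖ ≤ Real.sqrt ‖M‖ * Real.sqrt ⟪M x, x⟫_ℝ := by
    intro x
    have h1 : ‖M x‖ ≤ ‖C‖ * ‖Cs x‖ := by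
      rw [hdec]; exact C.le_opNorm (Cs x)
    have h2 : Real.sqrt ⟪M x, x⟫_ℝ = ‖Cs x‖ := by
      rw [hinner x, Real.sqrt_sq (norm_nonneg _)]
    rw [hsqrtM, h2]; exact h1
  -- Lipschitz step
  have hlip : ‖J u - J v‖ ≤ L * ‖M u - M v‖ := hLip (M u) (M v) (J u) (J v) (hJ u) (hJ v)
  have hMuv : M u - M v = M (u - v) := (map_sub M u v).symm
  rw [hMuv] at hlip
  rcases le_or_gt 0 L with hL | hL
  · calc ‖J u - J v‖ ≤ L * ‖M (u - v)‖ := hlip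
      _ ≤ L * (Real.sqrt ‖M‖ * Real.sqrt ⟪M (u - v), u - v⟫_ℝ) :=
        mul_le_mul_of_nonneg_left (hMx (u - v)) hL
      _ = L * Real.sqrt ‖M‖ * Real.sqrt ⟪M (u - v), u - v⟫_ℝ := by ring
  · -- L < 0: then M (u-v) = 0, hence Cs (u-v) = 0, both sides 0
    have h0 : (0:ℝ) ≤ L * ‖M (u - v)‖ := le_trans (norm_nonneg _) hlip
    have hM0 : ‖M (u - v)‖ = 0 := by
      rcases (norm_nonneg (M (u - v))).eq_or_lt with h | h
      · exact h.symm
      · nlinarith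
    have hM0' : M (u - v) = 0 := norm_eq_zero.mp hM0
    have hCs0 : Cs (u - v) = 0 := by
      apply hCinj
      have : C (Cs (u - v)) = M (u - v) := by rw [hdec]; rfl
      rw [this, hM0', map_zero]
    have hi0 : ⟪M (u - v), u - v⟫_ℝ = 0 := by rw [hinner, hCs0]; simp
    have hJ0 : ‖J u - J v‖ ≤ 0 := by rw [hM0', norm_zero, mul_zero] at hlip; exact hlip
    rw [hi0, Real.sqrt_zero, mul_zero]
    exact hJ0
end

section
/- Let T : H ⇉ H with zer T ≠ ∅, and let (M_k) be admissible preconditioners for T with M_k → M in operator norm and ∑_k ‖M_{k+1} − M_k‖ < ∞. Assume each M_k⁻¹T is M_k-monotone and each (M_k + T)⁻¹ is L-Lipschitz. Let u^{k+1} = (M_k + T)⁻¹ M_k u^k. Then (u^k) is bounded, (‖u^k − u*‖_{M_k}) converges for every fixed point u* of (M+T)⁻¹M, and ∑_k ‖u^{k+1} − u^k‖²_{M_k} < ∞. -/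
open scoped InnerProductSpace


section aux
variable {H : Type} [NormedAddCommGroup H] [InnerProductSpace ℝ H] [CompleteSpace H]

lemma aux_symm (A : H →L[ℝ] H) (hA : IsSelfAdjoint A) (x y : H) :
    ⟪A x, y⟫_ℝ = ⟪A y, x⟫_ℝ := by
  have h : ⟪A x, y⟫_ℝ = ⟪x, A y⟫_ℝ := hA.isSymmetric x y
  rw [h, real_inner_comm]

lemma aux_expand (A : H →L[ℝ] H) (hA : IsSelfAdjoint A) (p q : H) :
    ⟪A (p + q), p + q⟫_ℝ = ⟪A p, p⟫_ℝ + ⟪A q, q⟫_ℝ + 2 * ⟪A q, p⟫_ℝ := by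
  have h := aux_symm A hA p q
  simp only [map_add, inner_add_left, inner_add_right]
  linarith

lemma aux_CS (A : H →L[ℝ] H) (hA : IsSelfAdjoint A) (hpsd : ∀ v : H, 0 ≤ ⟪A v, v⟫_ℝ)
    (x y : H) : ⟪A x, y⟫_ℝ ^ 2 ≤ ⟪A x, x⟫_ℝ * ⟪A y, y⟫_ℝ := by
  have key : ∀ t : ℝ, 0 ≤ ⟪A y, y⟫_ℝ * (t * t) + (2 * ⟪A x, y⟫_ℝ) * t + ⟪A x, x⟫_ℝ := by
    intro t
    have h0 := hpsd (x + t • y)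
    rw [aux_expand A hA x (t • y)] at h0
    have h1 : ⟪A (t • y), t • y⟫_ℝ = t * t * ⟪A y, y⟫_ℝ := by
      simp [map_smul, real_inner_smul_left, real_inner_smul_right]; ring
    have h2 : ⟪A (t • y), x⟫_ℝ = t * ⟪A x, y⟫_ℝ := by
      rw [map_smul, real_inner_smul_left, aux_symm A hA y x]
    rw [h1, h2] at h0
    linarith
  have hd := discrim_le_zero key
  rw [discrim] at hd
  nlinarith [hd]

lemma aux_normsq (A : H →L[ℝ] H) (hA : IsSelfAdjoint A) (hpsd : ∀ v : H, 0 ≤ ⟪A v, v⟫_ℝ)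
    (x : H) : ‖A x‖ ^ 2 ≤ ‖A‖ * ⟪A x, x⟫_ℝ := by
  have h1 := aux_CS A hA hpsd x (A x)
  have h3 : ⟪A x, A x⟫_ℝ = ‖A x‖ ^ 2 := real_inner_self_eq_norm_sq (A x)
  have h2 : ⟪A (A x), A x⟫_ℝ ≤ ‖A‖ * ‖A x‖ * ‖A x‖ := by
    calc ⟪A (A x), A x⟫_ℝ ≤ ‖A (A x)‖ * ‖A x‖ := real_inner_le_norm _ _
    _ ≤ (‖A‖ * ‖A x‖) * ‖A x‖ := by
        have := A.le_opNorm (A x)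
        exact mul_le_mul_of_nonneg_right this (norm_nonneg _)
    _ = ‖A‖ * ‖A x‖ * ‖A x‖ := by ring
  rw [h3] at h1
  rcases eq_or_lt_of_le (norm_nonneg (A x)) with hn | hn
  · have : ‖A x‖ = 0 := hn.symm
    rw [this]
    simpa using mul_nonneg (norm_nonneg A) (hpsd x)
  · have h4 : ⟪A x, x⟫_ℝ * ⟪A (A x), A x⟫_ℝ ≤ ⟪A x, x⟫_ℝ * (‖A‖ * ‖A x‖ * ‖A x‖) :=
      mul_le_mul_of_nonneg_left h2 (hpsd x)
    nlinarith [h1, h4, hn, mul_pos hn hn]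

/-- Main lemma for the degenerate variable metric proximal point algorithm:
boundedness of the iterates, convergence of ‖u^k − u*‖_{M_k}, and summability of
‖u^{k+1} − u^k‖²_{M_k}. -/
theorem stmt5 {H : Type} [NormedAddCommGroup H] [InnerProductSpace ℝ H] [CompleteSpace H]
    (T : H → Set H) (hzer : ∃ z : H, (0 : H) ∈ T z)
    (M : ℕ → H →L[ℝ] H) (Mlim : H →L[ℝ] H)
    (hsa : ∀ k, IsSelfAdjoint (M k)) (hpsd : ∀ k, ∀ x : H, 0 ≤ ⟪M k x, x⟫_ℝ)
    (hsalim : IsSelfAdjoint Mlim) (hpsdlim : ∀ x : H, 0 ≤ ⟪Mlim x, x⟫_ℝ)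
    (hconv : Filter.Tendsto M Filter.atTop (nhds Mlim))
    (hsum : Summable (fun k => ‖M (k + 1) - M k‖))
    -- each M_k⁻¹ T is M_k-monotone:
    (hmono : ∀ k, ∀ u₁ v₁ u₂ v₂ : H, M k v₁ ∈ T u₁ → M k v₂ ∈ T u₂ →
      0 ≤ ⟪M k (u₁ - u₂), v₁ - v₂⟫_ℝ)
    (L : ℝ)
    -- each (M_k + T)⁻¹ is L-Lipschitz:
    (hLip : ∀ k, ∀ x₁ x₂ y₁ y₂ : H, x₁ - M k y₁ ∈ T y₁ → x₂ - M k y₂ ∈ T y₂ →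
      ‖y₁ - y₂‖ ≤ L * ‖x₁ - x₂‖)
    -- J k = (M_k + T)⁻¹ M_k single-valued with full domain (admissibility):
    (J : ℕ → H → H)
    (hJ : ∀ k x, M k x - M k (J k x) ∈ T (J k x))
    (hJuniq : ∀ k x v, M k x - M k v ∈ T v → v = J k x)
    -- J^M = (M + T)⁻¹ M single-valued with full domain (admissibility of the limit):
    (Jlim : H → H)
    (hJlim : ∀ x, Mlim x - Mlim (Jlim x) ∈ T (Jlim x))
    (hJlimuniq : ∀ x v, Mlim x - Mlim v ∈ T v → v = Jlim x)
    (u : ℕ → H) (hu : ∀ k, u (k + 1) = J k (u k)) :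
    (∃ R : ℝ, ∀ k, ‖u k‖ ≤ R) ∧
    (∀ ustar : H, Jlim ustar = ustar →
      ∃ l : ℝ, Filter.Tendsto (fun k => Real.sqrt ⟪M k (u k - ustar), u k - ustar⟫_ℝ)
        Filter.atTop (nhds l)) ∧
    Summable (fun k => ⟪M k (u (k + 1) - u k), u (k + 1) - u k⟫_ℝ) := by
  obtain ⟨z, hz⟩ := hzer
  obtain ⟨C, hC⟩ := (hconv.norm).bddAbove_range
  have hCk : ∀ k, ‖M k‖ ≤ C := fun k => hC (Set.mem_range_self k)
  have hC0 : (0 : ℝ) ≤ C := le_trans (norm_nonneg (M 0)) (hCk 0)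
  have hε0 : ∀ k, (0 : ℝ) ≤ ‖M (k + 1) - M k‖ := fun k => norm_nonneg _
  have ha0 : ∀ (w : H) (k : ℕ), 0 ≤ ⟪M k (u k - w), u k - w⟫_ℝ := fun w k => hpsd k _
  have hd0 : ∀ k, 0 ≤ ⟪M k (u (k + 1) - u k), u (k + 1) - u k⟫_ℝ := fun k => hpsd k _
  have hin : ∀ k, M k (u k) - M k (u (k + 1)) ∈ T (u (k + 1)) := by
    intro k; rw [hu k]; exact hJ k (u k)
  -- key one-step inequality
  have key : ∀ w : H, (0 : H) ∈ T w → ∀ k,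
      ⟪M (k+1) (u (k+1) - w), u (k+1) - w⟫_ℝ + ⟪M k (u (k+1) - u k), u (k+1) - u k⟫_ℝ
        ≤ ⟪M k (u k - w), u k - w⟫_ℝ
          + ‖M (k+1) - M k‖ * (L ^ 2 * (C * ⟪M k (u k - w), u k - w⟫_ℝ)) := by
    intro w hw k
    have hmem : M k (u k - u (k + 1)) ∈ T (u (k + 1)) := by
      rw [map_sub]; exact hin k
    have hzero : M k (0 : H) ∈ T w := by rw [map_zero]; exact hw
    have hmon := hmono k (u (k + 1)) (u k - u (k + 1)) w 0 hmem hzero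
    rw [sub_zero] at hmon
    have hfe : ⟪M k (u (k+1) - w), u (k+1) - w⟫_ℝ
        + ⟪M k (u (k+1) - u k), u (k+1) - u k⟫_ℝ ≤ ⟪M k (u k - w), u k - w⟫_ℝ := by
      have hexp := aux_expand (M k) (hsa k) (u k - u (k + 1)) (u (k + 1) - w)
      have e1 : (u k - u (k + 1)) + (u (k + 1) - w) = u k - w := by abel
      rw [e1] at hexp
      have e2 : ⟪M k (u (k+1) - u k), u (k+1) - u k⟫_ℝ
          = ⟪M k (u k - u (k+1)), u k - u (k+1)⟫_ℝ := by
        have e : u (k + 1) - u k = -(u k - u (k + 1)) := by abel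
        rw [e, map_neg, inner_neg_neg]
      rw [e2]; linarith [hexp, hmon]
    have hlip : ‖u (k + 1) - w‖ ≤ L * ‖M k (u k) - M k w‖ := by
      refine hLip k (M k (u k)) (M k w) (u (k + 1)) w (hin k) ?_
      rw [sub_self]; exact hw
    have hnormsq : ‖M k (u k - w)‖ ^ 2 ≤ C * ⟪M k (u k - w), u k - w⟫_ℝ := by
      calc ‖M k (u k - w)‖ ^ 2 ≤ ‖M k‖ * ⟪M k (u k - w), u k - w⟫_ℝ :=
            aux_normsq (M k) (hsa k) (hpsd k) _
        _ ≤ C * ⟪M k (u k - w), u k - w⟫_ℝ :=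
            mul_le_mul_of_nonneg_right (hCk k) (hpsd k _)
    have hyb : ‖u (k + 1) - w‖ ^ 2 ≤ L ^ 2 * (C * ⟪M k (u k - w), u k - w⟫_ℝ) := by
      rw [← map_sub] at hlip
      nlinarith [norm_nonneg (u (k + 1) - w), norm_nonneg (M k (u k - w)), hlip, hnormsq]
    have hmc : ⟪M (k+1) (u (k+1) - w), u (k+1) - w⟫_ℝ
        ≤ ⟪M k (u (k+1) - w), u (k+1) - w⟫_ℝ + ‖M (k+1) - M k‖ * ‖u (k+1) - w‖ ^ 2 := by
      have hdiff : ⟪M (k+1) (u (k+1) - w), u (k+1) - w⟫_ℝ - ⟪M k (u (k+1) - w), u (k+1) - w⟫_ℝ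
          = ⟪(M (k+1) - M k) (u (k+1) - w), u (k+1) - w⟫_ℝ := by
        simp [ContinuousLinearMap.sub_apply, inner_sub_left]
      have hb : ⟪(M (k+1) - M k) (u (k+1) - w), u (k+1) - w⟫_ℝ
          ≤ ‖M (k+1) - M k‖ * ‖u (k+1) - w‖ ^ 2 := by
        calc ⟪(M (k+1) - M k) (u (k+1) - w), u (k+1) - w⟫_ℝ
            ≤ ‖(M (k+1) - M k) (u (k+1) - w)‖ * ‖u (k+1) - w‖ := real_inner_le_norm _ _
          _ ≤ (‖M (k+1) - M k‖ * ‖u (k+1) - w‖) * ‖u (k+1) - w‖ :=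
              mul_le_mul_of_nonneg_right ((M (k+1) - M k).le_opNorm _) (norm_nonneg _)
          _ = ‖M (k+1) - M k‖ * ‖u (k+1) - w‖ ^ 2 := by ring
      linarith
    have hfin : ‖M (k+1) - M k‖ * ‖u (k+1) - w‖ ^ 2
        ≤ ‖M (k+1) - M k‖ * (L ^ 2 * (C * ⟪M k (u k - w), u k - w⟫_ℝ)) :=
      mul_le_mul_of_nonneg_left hyb (hε0 k)
    linarith
  -- geometric growth bound
  have hgrow : ∀ w : H, (0 : H) ∈ T w → ∀ k,
      ⟪M k (u k - w), u k - w⟫_ℝ ≤ ⟪M 0 (u 0 - w), u 0 - w⟫_ℝ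
        * Real.exp ((L ^ 2 * C) * ∑ j ∈ Finset.range k, ‖M (j+1) - M j‖) := by
    intro w hw
    intro k
    induction k with
    | zero => simp
    | succ k ih =>
      have hk := key w hw k
      have h1 : ⟪M (k+1) (u (k+1) - w), u (k+1) - w⟫_ℝ
          ≤ ⟪M k (u k - w), u k - w⟫_ℝ * (1 + (L ^ 2 * C) * ‖M (k+1) - M k‖) := by
        nlinarith [hd0 k, hk]
      have h2 : (1 + (L ^ 2 * C) * ‖M (k+1) - M k‖)
          ≤ Real.exp ((L ^ 2 * C) * ‖M (k+1) - M k‖) := by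
        linarith [Real.add_one_le_exp ((L ^ 2 * C) * ‖M (k+1) - M k‖)]
      have hnn : (0:ℝ) ≤ 1 + (L ^ 2 * C) * ‖M (k+1) - M k‖ := by
        have := mul_nonneg (mul_nonneg (sq_nonneg L) hC0) (hε0 k); linarith
      have hb0 : (0:ℝ) ≤ ⟪M 0 (u 0 - w), u 0 - w⟫_ℝ
          * Real.exp ((L ^ 2 * C) * ∑ j ∈ Finset.range k, ‖M (j+1) - M j‖) :=
        mul_nonneg (ha0 w 0) (Real.exp_pos _).le
      calc ⟪M (k+1) (u (k+1) - w), u (k+1) - w⟫_ℝ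
          ≤ ⟪M k (u k - w), u k - w⟫_ℝ * (1 + (L ^ 2 * C) * ‖M (k+1) - M k‖) := h1
        _ ≤ (⟪M 0 (u 0 - w), u 0 - w⟫_ℝ
              * Real.exp ((L ^ 2 * C) * ∑ j ∈ Finset.range k, ‖M (j+1) - M j‖))
            * Real.exp ((L ^ 2 * C) * ‖M (k+1) - M k‖) :=
            mul_le_mul ih h2 hnn hb0
        _ = ⟪M 0 (u 0 - w), u 0 - w⟫_ℝ
              * Real.exp ((L ^ 2 * C) * ∑ j ∈ Finset.range (k+1), ‖M (j+1) - M j‖) := by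
            rw [mul_assoc, ← Real.exp_add, Finset.sum_range_succ, mul_add]
  -- uniform bound on a w k
  have hbddA : ∀ w : H, (0 : H) ∈ T w → ∀ k,
      ⟪M k (u k - w), u k - w⟫_ℝ ≤ ⟪M 0 (u 0 - w), u 0 - w⟫_ℝ
        * Real.exp ((L ^ 2 * C) * ∑' j, ‖M (j+1) - M j‖) := by
    intro w hw k
    refine le_trans (hgrow w hw k) (mul_le_mul_of_nonneg_left ?_ (ha0 w 0))
    refine Real.exp_le_exp.2 (mul_le_mul_of_nonneg_left ?_ (mul_nonneg (sq_nonneg L) hC0))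
    exact Summable.sum_le_tsum (Finset.range k) (fun i _ => hε0 i) hsum
  -- quasi-Fejér with summable perturbation
  have quasi : ∀ w : H, (0 : H) ∈ T w → ∃ D : ℕ → ℝ, Summable D ∧ (∀ k, 0 ≤ D k) ∧
      ∀ k, ⟪M (k+1) (u (k+1) - w), u (k+1) - w⟫_ℝ
          + ⟪M k (u (k+1) - u k), u (k+1) - u k⟫_ℝ
        ≤ ⟪M k (u k - w), u k - w⟫_ℝ + D k := by
    intro w hw
    set A : ℝ := ⟪M 0 (u 0 - w), u 0 - w⟫_ℝ
      * Real.exp ((L ^ 2 * C) * ∑' j, ‖M (j+1) - M j‖) with hA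
    refine ⟨fun k => ‖M (k+1) - M k‖ * (L ^ 2 * (C * A)), hsum.mul_right _,
      fun k => mul_nonneg (hε0 k) (mul_nonneg (sq_nonneg L)
        (mul_nonneg hC0 (mul_nonneg (ha0 w 0) (Real.exp_pos _).le))), fun k => ?_⟩
    have hk := key w hw k
    have hstep : ‖M (k+1) - M k‖ * (L ^ 2 * (C * ⟪M k (u k - w), u k - w⟫_ℝ))
        ≤ ‖M (k+1) - M k‖ * (L ^ 2 * (C * A)) := by
      refine mul_le_mul_of_nonneg_left (mul_le_mul_of_nonneg_left
        (mul_le_mul_of_nonneg_left ?_ hC0) (sq_nonneg L)) (hε0 k)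
      exact hbddA w hw k
    show _ ≤ ⟪M k (u k - w), u k - w⟫_ℝ + ‖M (k+1) - M k‖ * (L ^ 2 * (C * A))
    linarith
  refine ⟨?_, ?_, ?_⟩
  · -- boundedness
    set A : ℝ := ⟪M 0 (u 0 - z), u 0 - z⟫_ℝ
      * Real.exp ((L ^ 2 * C) * ∑' j, ‖M (j+1) - M j‖) with hA
    refine ⟨max ‖u 0‖ (‖z‖ + |L| * Real.sqrt (C * A)), fun k => ?_⟩
    cases k with
    | zero => exact le_max_left _ _
    | succ n =>
      have hlip : ‖u (n + 1) - z‖ ≤ L * ‖M n (u n - z)‖ := by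
        have := hLip n (M n (u n)) (M n z) (u (n + 1)) z (hin n)
          (by rw [sub_self]; exact hz)
        rwa [← map_sub] at this
      have hnormsq : ‖M n (u n - z)‖ ^ 2 ≤ C * A := by
        calc ‖M n (u n - z)‖ ^ 2 ≤ ‖M n‖ * ⟪M n (u n - z), u n - z⟫_ℝ :=
              aux_normsq (M n) (hsa n) (hpsd n) _
          _ ≤ C * ⟪M n (u n - z), u n - z⟫_ℝ :=
              mul_le_mul_of_nonneg_right (hCk n) (hpsd n _)
          _ ≤ C * A := mul_le_mul_of_nonneg_left (hbddA z hz n) hC0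
      have hns : ‖M n (u n - z)‖ ≤ Real.sqrt (C * A) := by
        rw [← Real.sqrt_sq (norm_nonneg (M n (u n - z)))]
        exact Real.sqrt_le_sqrt hnormsq
      have h1 : ‖u (n + 1) - z‖ ≤ |L| * Real.sqrt (C * A) := by
        calc ‖u (n + 1) - z‖ ≤ L * ‖M n (u n - z)‖ := hlip
          _ ≤ |L| * ‖M n (u n - z)‖ :=
              mul_le_mul_of_nonneg_right (le_abs_self L) (norm_nonneg _)
          _ ≤ |L| * Real.sqrt (C * A) :=
              mul_le_mul_of_nonneg_left hns (abs_nonneg L)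
      have h2 : ‖u (n + 1)‖ ≤ ‖z‖ + ‖u (n + 1) - z‖ := by
        calc ‖u (n + 1)‖ = ‖z + (u (n + 1) - z)‖ := by rw [add_sub_cancel]
          _ ≤ ‖z‖ + ‖u (n + 1) - z‖ := norm_add_le _ _
      refine le_trans ?_ (le_max_right _ _)
      linarith
  · -- convergence of ‖u^k - u*‖_{M_k}
    intro ustar hfix
    have hw : (0 : H) ∈ T ustar := by
      have h := hJlim ustar
      rw [hfix, sub_self] at h
      exact h
    obtain ⟨D, hDsum, hD0, hDkey⟩ := quasi ustar hw
    have hanti : Antitone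
        (fun k => ⟪M k (u k - ustar), u k - ustar⟫_ℝ - ∑ j ∈ Finset.range k, D j) := by
      refine antitone_nat_of_succ_le fun k => ?_
      have hk := hDkey k
      have := hd0 k
      rw [Finset.sum_range_succ]
      linarith
    have hbdd : BddBelow (Set.range
        (fun k => ⟪M k (u k - ustar), u k - ustar⟫_ℝ - ∑ j ∈ Finset.range k, D j)) := by
      refine ⟨-(∑' j, D j), ?_⟩
      rintro x ⟨k, rfl⟩
      have h1 := ha0 ustar k
      have h2 : ∑ j ∈ Finset.range k, D j ≤ ∑' j, D j :=
        Summable.sum_le_tsum (Finset.range k) (fun i _ => hD0 i) hDsum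
      show -∑' j, D j ≤ ⟪M k (u k - ustar), u k - ustar⟫_ℝ - ∑ j ∈ Finset.range k, D j
      linarith
    have h1 := tendsto_atTop_ciInf hanti hbdd
    have h2 := hDsum.hasSum.tendsto_sum_nat
    have h3 := h1.add h2
    have h4 : Filter.Tendsto (fun k => ⟪M k (u k - ustar), u k - ustar⟫_ℝ)
        Filter.atTop (nhds ((⨅ k, (⟪M k (u k - ustar), u k - ustar⟫_ℝ
          - ∑ j ∈ Finset.range k, D j)) + ∑' j, D j)) := by
      convert h3 using 2 with k
      ring
    exact ⟨_, (Real.continuous_sqrt.tendsto _).comp h4⟩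
  · -- summability
    obtain ⟨D, hDsum, hD0, hDkey⟩ := quasi z hz
    refine summable_of_sum_range_le hd0 (c := ⟪M 0 (u 0 - z), u 0 - z⟫_ℝ + ∑' j, D j) ?_
    intro n
    have hpart : ∀ n, (∑ k ∈ Finset.range n, ⟪M k (u (k+1) - u k), u (k+1) - u k⟫_ℝ)
        + ⟪M n (u n - z), u n - z⟫_ℝ
        ≤ ⟪M 0 (u 0 - z), u 0 - z⟫_ℝ + ∑ k ∈ Finset.range n, D k := by
      intro n
      induction n with
      | zero => simp
      | succ n ih =>
        have hk := hDkey n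
        rw [Finset.sum_range_succ, Finset.sum_range_succ]
        linarith
    have h1 := hpart n
    have h2 : ∑ k ∈ Finset.range n, D k ≤ ∑' j, D j :=
      Summable.sum_le_tsum (Finset.range n) (fun i _ => hD0 i) hDsum
    have h3 := ha0 z n
    linarith
end aux
end

section
/- Under the hypotheses of the degenerate variable metric proximal point lemma (M_k → M, ∑‖M_{k+1}−M_k‖ < ∞, M_k⁻¹T M_k-monotone, (M_k+T)⁻¹ L-Lipschitz, zer T ≠ ∅), if additionally every weak cluster point of the iterates u^{k+1} = (M_k+T)⁻¹M_k u^k is a fixed point of (M+T)⁻¹M, then (u^k) converges weakly to some u ∈ zer T. -/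
open scoped InnerProductSpace
open Filter Topology

section Helpers

variable {H : Type} [NormedAddCommGroup H] [InnerProductSpace ℝ H] [CompleteSpace H]

lemma sa_inner {A : H →L[ℝ] H} (hA : IsSelfAdjoint A) (x y : H) :
    ⟪A x, y⟫_ℝ = ⟪x, A y⟫_ℝ := by
  rw [← ContinuousLinearMap.adjoint_inner_right, hA.adjoint_eq]

lemma psd_cs {A : H →L[ℝ] H} (hA : IsSelfAdjoint A) (hpsd : ∀ x : H, 0 ≤ ⟪A x, x⟫_ℝ)
    (v w : H) : ⟪A v, w⟫_ℝ ^ 2 ≤ ⟪A v, v⟫_ℝ * ⟪A w, w⟫_ℝ := by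
  have key : ∀ t : ℝ, 0 ≤ ⟪A v, v⟫_ℝ * (t * t) + (2 * ⟪A v, w⟫_ℝ) * t + ⟪A w, w⟫_ℝ := by
    intro t
    have h0 := hpsd (t • v + w)
    have hsym : ⟪A w, v⟫_ℝ = ⟪A v, w⟫_ℝ := by
      rw [sa_inner hA w v, real_inner_comm]
    simp only [map_add, map_smul, inner_add_left, inner_add_right, real_inner_smul_left,
      real_inner_smul_right] at h0
    rw [hsym] at h0
    nlinarith [h0]
  have hd := discrim_le_zero key
  rw [discrim] at hd
  nlinarith [hd]

lemma psd_norm_sq {A : H →L[ℝ] H} (hA : IsSelfAdjoint A) (hpsd : ∀ x : H, 0 ≤ ⟪A x, x⟫_ℝ)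
    (v : H) : ‖A v‖ ^ 2 ≤ ‖A‖ * ⟪A v, v⟫_ℝ := by
  have h1 := psd_cs hA hpsd v (A v)
  have h2 : ⟪A v, A v⟫_ℝ = ‖A v‖ ^ 2 := real_inner_self_eq_norm_sq _
  have h3 : ⟪A (A v), A v⟫_ℝ ≤ ‖A‖ * ‖A v‖ * ‖A v‖ := by
    calc ⟪A (A v), A v⟫_ℝ ≤ ‖A (A v)‖ * ‖A v‖ := by
          have := abs_real_inner_le_norm (A (A v)) (A v); exact (abs_le.mp this).2
      _ ≤ ‖A‖ * ‖A v‖ * ‖A v‖ := by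
          have := A.le_opNorm (A v)
          nlinarith [norm_nonneg (A v)]
  rcases eq_or_lt_of_le (norm_nonneg (A v)) with h | h
  · rw [← h]
    simpa using mul_nonneg (norm_nonneg A) (hpsd v)
  · have h4 : ⟪A (A v), A v⟫_ℝ * ⟪A v, v⟫_ℝ ≤ ‖A‖ * ‖A v‖ * ‖A v‖ * ⟪A v, v⟫_ℝ :=
      mul_le_mul_of_nonneg_right h3 (hpsd v)
    nlinarith [h1, h2, h4, mul_pos h h]

lemma quasi_fejer (b ε : ℕ → ℝ) (hb : ∀ k, 0 ≤ b k) (hε : ∀ k, 0 ≤ ε k)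
    (hsum : Summable ε) (hrec : ∀ k, b (k + 1) ≤ b k * (1 + ε k)) :
    (∃ r, Tendsto b atTop (𝓝 r)) ∧ ∀ k, b k ≤ b 0 * Real.exp (∑' j, ε j) := by
  set S : ℕ → ℝ := fun k => ∑' j, ε (j + k) with hS
  have hSnn : ∀ k, 0 ≤ S k := fun k => tsum_nonneg (fun j => hε _)
  have hsummk : ∀ k, Summable (fun j => ε (j + k)) := fun k => (summable_nat_add_iff k).mpr hsum
  have hSrec : ∀ k, S k = ε k + S (k + 1) := by
    intro k
    have h := Summable.tsum_eq_zero_add (hsummk k)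
    simp only [zero_add] at h
    show (∑' j, ε (j + k)) = ε k + ∑' j, ε (j + (k + 1))
    rw [h]
    congr 1
    exact tsum_congr fun j => congrArg ε (by omega)
  set d : ℕ → ℝ := fun k => b k * Real.exp (S k) with hd
  have hdmono : ∀ k, d (k + 1) ≤ d k := by
    intro k
    have h1 : b (k + 1) * Real.exp (S (k + 1)) ≤ b k * (1 + ε k) * Real.exp (S (k + 1)) := by
      have := Real.exp_pos (S (k + 1))
      nlinarith [hrec k]
    have hkey := mul_le_mul_of_nonneg_left (Real.add_one_le_exp (ε k))
      (mul_nonneg (hb k) (Real.exp_pos (S (k + 1))).le)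
    have h3 : b k * Real.exp (ε k) * Real.exp (S (k + 1)) = b k * Real.exp (S k) := by
      rw [mul_assoc, ← Real.exp_add, ← hSrec k]
    calc d (k + 1) = b (k + 1) * Real.exp (S (k + 1)) := rfl
      _ ≤ b k * (1 + ε k) * Real.exp (S (k + 1)) := h1
      _ ≤ b k * Real.exp (ε k) * Real.exp (S (k + 1)) := by nlinarith [hkey]
      _ = d k := h3
  have hanti : Antitone d := antitone_nat_of_succ_le hdmono
  have hdnn : ∀ k, 0 ≤ d k := fun k => mul_nonneg (hb k) (Real.exp_pos _).le
  have hbdd : BddBelow (Set.range d) := ⟨0, by rintro _ ⟨k, rfl⟩; exact hdnn k⟩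
  have hdlim : Tendsto d atTop (𝓝 (⨅ k, d k)) := tendsto_atTop_ciInf hanti hbdd
  have hS0 : Tendsto S atTop (𝓝 0) := tendsto_sum_nat_add ε
  constructor
  · refine ⟨(⨅ k, d k) * Real.exp (-0), ?_⟩
    have : Tendsto (fun k => d k * Real.exp (-(S k))) atTop (𝓝 ((⨅ k, d k) * Real.exp (-0))) :=
      hdlim.mul ((Real.continuous_exp.tendsto _).comp hS0.neg)
    refine this.congr (fun k => ?_)
    simp only [hd, mul_assoc, ← Real.exp_add, add_neg_cancel, Real.exp_zero, mul_one]
  · intro k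
    have h2 : (1 : ℝ) ≤ Real.exp (S k) := Real.one_le_exp (hSnn k)
    have h1 : b k ≤ d k := by simpa using mul_le_mul_of_nonneg_left h2 (hb k)
    have h2' : d k ≤ d 0 := hanti (Nat.zero_le k)
    have h3 : d 0 = b 0 * Real.exp (∑' j, ε j) := by simp [hd, hS]
    linarith


lemma weak_seq_compact (x : ℕ → H) (C : ℝ) (hC : ∀ n, ‖x n‖ ≤ C) :
    ∃ (l : H) (φ : ℕ → ℕ), StrictMono φ ∧
      ∀ w : H, Tendsto (fun n => ⟪x (φ n), w⟫_ℝ) atTop (𝓝 ⟪l, w⟫_ℝ) := by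
  have hC0 : 0 ≤ C := le_trans (norm_nonneg _) (hC 0)
  set y : ℕ → (ℕ → ℝ) := fun n m => ⟪x n, x m⟫_ℝ with hy
  have hmem : ∀ n, y n ∈ Set.univ.pi (fun _ : ℕ => Set.Icc (-(C * C)) (C * C)) := by
    intro n m _
    have h1 := abs_le.mp (abs_real_inner_le_norm (x n) (x m))
    have h2 : ‖x n‖ * ‖x m‖ ≤ C * C :=
      mul_le_mul (hC n) (hC m) (norm_nonneg _) hC0
    exact ⟨by linarith [h1.1], by linarith [h1.2]⟩
  obtain ⟨g, -, φ, hφ, hg⟩ :=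
    (isCompact_univ_pi (fun _ : ℕ => isCompact_Icc)).tendsto_subseq hmem
  rw [tendsto_pi_nhds] at hg
  set K := (Submodule.span ℝ (Set.range x)).topologicalClosure with hK
  haveI : CompleteSpace K := (Submodule.isClosed_topologicalClosure _).completeSpace_coe
  have hspan : ∀ v ∈ Submodule.span ℝ (Set.range x),
      ∃ r, Tendsto (fun n => ⟪x (φ n), v⟫_ℝ) atTop (𝓝 r) := by
    intro v hv
    induction hv using Submodule.span_induction with
    | mem v hv =>
      obtain ⟨m, rfl⟩ := hv
      exact ⟨g m, hg m⟩
    | zero => exact ⟨0, by simpa using (tendsto_const_nhds : Tendsto (fun _ : ℕ => (0:ℝ)) atTop _)⟩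
    | add a b ha hb iha ihb =>
      obtain ⟨r, hr⟩ := iha; obtain ⟨s, hs⟩ := ihb
      exact ⟨r + s, by simpa [inner_add_right] using hr.add hs⟩
    | smul c a ha iha =>
      obtain ⟨r, hr⟩ := iha
      exact ⟨c * r, by simpa [real_inner_smul_right] using hr.const_mul c⟩
  have hcauchy : ∀ w : H, ∃ r, Tendsto (fun n => ⟪x (φ n), w⟫_ℝ) atTop (𝓝 r) := by
    intro w
    have hxK : ∀ n, x n ∈ K :=
      fun n => Submodule.le_topologicalClosure _ (Submodule.subset_span ⟨n, rfl⟩)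
    set p : H := (K.orthogonalProjectionOnto w : H) with hp
    have hwp : ∀ n, ⟪x (φ n), w⟫_ℝ = ⟪x (φ n), p⟫_ℝ := by
      intro n
      have horto : w - p ∈ Kᗮ := K.sub_starProjection_mem_orthogonal w
      have h0 : ⟪x (φ n), w - p⟫_ℝ = 0 :=
        Submodule.inner_right_of_mem_orthogonal (hxK (φ n)) horto
      rw [inner_sub_right] at h0; linarith
    have hpcl : p ∈ closure (Submodule.span ℝ (Set.range x) : Set H) := by
      rw [← Submodule.topologicalClosure_coe]
      exact (K.orthogonalProjectionOnto w).2
    have hcs : CauchySeq (fun n => ⟪x (φ n), p⟫_ℝ) := by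
      rw [Metric.cauchySeq_iff]
      intro ep hep
      obtain ⟨v, hv, hvp⟩ : ∃ v ∈ (Submodule.span ℝ (Set.range x) : Set H),
          dist p v < ep / (3 * (C + 1)) := by
        exact Metric.mem_closure_iff.mp hpcl _ (by positivity)
      obtain ⟨r, hr⟩ := hspan v hv
      obtain ⟨N, hN⟩ := Metric.cauchySeq_iff.mp hr.cauchySeq (ep / 3) (by positivity)
      refine ⟨N, fun m hm n hn => ?_⟩
      have hbound : ∀ j, |⟪x (φ j), p⟫_ℝ - ⟪x (φ j), v⟫_ℝ| < ep / 3 := by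
        intro j
        have h1 : |⟪x (φ j), p - v⟫_ℝ| ≤ ‖x (φ j)‖ * ‖p - v‖ := abs_real_inner_le_norm _ _
        rw [inner_sub_right] at h1
        have h2 : ‖p - v‖ < ep / (3 * (C + 1)) := by rwa [dist_eq_norm] at hvp
        have h3 : ‖x (φ j)‖ * ‖p - v‖ ≤ C * ‖p - v‖ :=
          mul_le_mul_of_nonneg_right (hC _) (norm_nonneg _)
        have h4 : C * ‖p - v‖ < ep / 3 := by
          have hlt : C * ‖p - v‖ ≤ C * (ep / (3 * (C + 1))) :=
            mul_le_mul_of_nonneg_left h2.le hC0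
          have : C * (ep / (3 * (C + 1))) < ep / 3 := by
            rw [← mul_div_assoc, div_lt_div_iff₀ (by positivity) (by norm_num : (0:ℝ) < 3)]
            nlinarith [hep, hC0]
          linarith
        linarith [h1, h3, h4]
      have hNm := hN m hm n hn
      rw [Real.dist_eq] at hNm ⊢
      have := hbound m
      have := hbound n
      have habs : |⟪x (φ m), p⟫_ℝ - ⟪x (φ n), p⟫_ℝ| ≤
          |⟪x (φ m), p⟫_ℝ - ⟪x (φ m), v⟫_ℝ| + |⟪x (φ m), v⟫_ℝ - ⟪x (φ n), v⟫_ℝ| +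
          |⟪x (φ n), v⟫_ℝ - ⟪x (φ n), p⟫_ℝ| := by
        have := abs_sub_le (⟪x (φ m), p⟫_ℝ) (⟪x (φ m), v⟫_ℝ) (⟪x (φ n), p⟫_ℝ)
        have := abs_sub_le (⟪x (φ m), v⟫_ℝ) (⟪x (φ n), v⟫_ℝ) (⟪x (φ n), p⟫_ℝ)
        linarith
      have h5 : |⟪x (φ n), v⟫_ℝ - ⟪x (φ n), p⟫_ℝ| = |⟪x (φ n), p⟫_ℝ - ⟪x (φ n), v⟫_ℝ| :=
        abs_sub_comm _ _
      linarith [hbound m, hbound n, habs, hNm, h5.le]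
    obtain ⟨r, hr⟩ := cauchySeq_tendsto_of_complete hcs
    exact ⟨r, by simpa only [← hwp] using hr⟩
  choose F hF using hcauchy
  have hFadd : ∀ a b, F (a + b) = F a + F b := fun a b =>
    tendsto_nhds_unique (hF (a + b)) (by simpa [inner_add_right] using (hF a).add (hF b))
  have hFsmul : ∀ (c : ℝ) a, F (c • a) = c * F a := fun c a =>
    tendsto_nhds_unique (hF (c • a)) (by simpa [real_inner_smul_right] using (hF a).const_mul c)
  have hFbound : ∀ a, |F a| ≤ C * ‖a‖ := by
    intro a
    have hb : ∀ n, |⟪x (φ n), a⟫_ℝ| ≤ C * ‖a‖ := fun n =>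
      le_trans (abs_real_inner_le_norm _ _)
        (mul_le_mul_of_nonneg_right (hC _) (norm_nonneg _))
    exact le_of_tendsto (hF a).abs (Eventually.of_forall hb)
  let Flin : H →ₗ[ℝ] ℝ :=
    { toFun := F, map_add' := hFadd, map_smul' := fun c a => hFsmul c a }
  let Fc : H →L[ℝ] ℝ := LinearMap.mkContinuous Flin C
    (fun a => by rw [Real.norm_eq_abs]; exact hFbound a)
  refine ⟨(InnerProductSpace.toDual ℝ H).symm Fc, φ, hφ, fun w => ?_⟩
  have heq : ⟪(InnerProductSpace.toDual ℝ H).symm Fc, w⟫_ℝ = Fc w :=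
    InnerProductSpace.toDual_symm_apply
  rw [heq]
  exact hF w

end Helpers

/-- Weak convergence of x to l. -/
def WeakConv {H : Type} [NormedAddCommGroup H] [InnerProductSpace ℝ H]
    (x : ℕ → H) (l : H) : Prop :=
  ∀ w : H, Filter.Tendsto (fun n => ⟪x n, w⟫_ℝ) Filter.atTop (nhds ⟪l, w⟫_ℝ)

/-- A weak (sequential) cluster point of x. -/
def WeakClusterPt {H : Type} [NormedAddCommGroup H] [InnerProductSpace ℝ H]
    (x : ℕ → H) (v : H) : Prop :=
  ∃ φ : ℕ → ℕ, StrictMono φ ∧ WeakConv (x ∘ φ) v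

/-- Degenerate variable metric proximal point: if every weak cluster point of the iterates
is a fixed point of (M+T)⁻¹M, then the iterates converge weakly to a zero of T. -/
theorem stmt6 {H : Type} [NormedAddCommGroup H] [InnerProductSpace ℝ H] [CompleteSpace H]
    (T : H → Set H) (hzer : ∃ z : H, (0 : H) ∈ T z)
    (M : ℕ → H →L[ℝ] H) (Mlim : H →L[ℝ] H)
    (hsa : ∀ k, IsSelfAdjoint (M k)) (hpsd : ∀ k, ∀ x : H, 0 ≤ ⟪M k x, x⟫_ℝ)
    (hsalim : IsSelfAdjoint Mlim) (hpsdlim : ∀ x : H, 0 ≤ ⟪Mlim x, x⟫_ℝ)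
    (hconv : Filter.Tendsto M Filter.atTop (nhds Mlim))
    (hsum : Summable (fun k => ‖M (k + 1) - M k‖))
    (hmono : ∀ k, ∀ u₁ v₁ u₂ v₂ : H, M k v₁ ∈ T u₁ → M k v₂ ∈ T u₂ →
      0 ≤ ⟪M k (u₁ - u₂), v₁ - v₂⟫_ℝ)
    (L : ℝ)
    (hLip : ∀ k, ∀ x₁ x₂ y₁ y₂ : H, x₁ - M k y₁ ∈ T y₁ → x₂ - M k y₂ ∈ T y₂ →
      ‖y₁ - y₂‖ ≤ L * ‖x₁ - x₂‖)
    (J : ℕ → H → H)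
    (hJ : ∀ k x, M k x - M k (J k x) ∈ T (J k x))
    (hJuniq : ∀ k x v, M k x - M k v ∈ T v → v = J k x)
    (Jlim : H → H)
    (hJlim : ∀ x, Mlim x - Mlim (Jlim x) ∈ T (Jlim x))
    (hJlimuniq : ∀ x v, Mlim x - Mlim v ∈ T v → v = Jlim x)
    (u : ℕ → H) (hu : ∀ k, u (k + 1) = J k (u k))
    -- every weak cluster point of (u^k) is a fixed point of J^M:
    (hcluster : ∀ v : H, WeakClusterPt u v → Jlim v = v) :
    ∃ l : H, (0 : H) ∈ T l ∧ WeakConv u l := by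
  obtain ⟨z0, hz0⟩ := hzer
  -- uniform bound on the operator norms
  obtain ⟨C₀, hC₀⟩ : ∃ C₀, ∀ k, ‖M k‖ ≤ C₀ := by
    have ht : Tendsto (fun k => ‖M k‖) atTop (𝓝 ‖Mlim‖) :=
      (continuous_norm.tendsto _).comp hconv
    obtain ⟨c, hc⟩ := ht.bddAbove_range
    exact ⟨c, fun k => hc ⟨k, rfl⟩⟩
  have hC₀nn : 0 ≤ C₀ := le_trans (norm_nonneg (M 0)) (hC₀ 0)
  -- ingredient used twice : the T-inclusion for the iterates
  have hTu : ∀ k, M k (u k) - M k (u (k + 1)) ∈ T (u (k + 1)) := by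
    intro k
    have h := hJ k (u k)
    rwa [← hu k] at h
  -- Step B : Lipschitz estimate
  have hstepB : ∀ z : H, (0 : H) ∈ T z → ∀ k, ‖u (k + 1) - z‖ ≤ L * ‖M k (u k - z)‖ := by
    intro z hz k
    have h2 : M k z - M k z ∈ T z := by simpa [sub_self] using hz
    have h := hLip k (M k (u k)) (M k z) (u (k + 1)) z (hTu k) h2
    rwa [← map_sub] at h
  -- Step A : contraction in the k-th metric
  have hstepA : ∀ z : H, (0 : H) ∈ T z → ∀ k,
      ⟪M k (u (k + 1) - z), u (k + 1) - z⟫_ℝ ≤ ⟪M k (u k - z), u k - z⟫_ℝ := by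
    intro z hz k
    have h2 : M k (0 : H) ∈ T z := by simpa using hz
    have hTu' : M k (u k - u (k + 1)) ∈ T (u (k + 1)) := by
      rw [map_sub]; exact hTu k
    have hm := hmono k (u (k + 1)) (u k - u (k + 1)) z 0 hTu' h2
    rw [sub_zero] at hm
    set a := u (k + 1) - z with ha
    set c := u k - z with hc
    have hac : u k - u (k + 1) = c - a := by rw [ha, hc]; abel
    rw [hac, inner_sub_right] at hm
    have hcs := psd_cs (hsa k) (hpsd k) a c
    nlinarith [hpsd k a, hpsd k c, hm, hcs, sq_nonneg (⟪M k a, c⟫_ℝ - ⟪M k a, a⟫_ℝ)]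
  -- quasi-Fejér estimates for any zero z
  have main : ∀ z : H, (0 : H) ∈ T z →
      (∃ r, Tendsto (fun k => ⟪M k (u k - z), u k - z⟫_ℝ) atTop (𝓝 r)) ∧
      (∃ B, ∀ k, ⟪M k (u k - z), u k - z⟫_ℝ ≤ B) := by
    intro z hz
    set b : ℕ → ℝ := fun k => ⟪M k (u k - z), u k - z⟫_ℝ with hb
    set ε : ℕ → ℝ := fun k => L ^ 2 * C₀ * ‖M (k + 1) - M k‖ with hε
    have hbnn : ∀ k, 0 ≤ b k := fun k => hpsd k _
    have hεnn : ∀ k, 0 ≤ ε k := fun k => by positivity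
    have hεsum : Summable ε := hsum.mul_left _
    have hw2 : ∀ k, ‖u (k + 1) - z‖ ^ 2 ≤ L ^ 2 * C₀ * b k := by
      intro k
      have hB := hstepB z hz k
      have h1 : ‖u (k + 1) - z‖ * ‖u (k + 1) - z‖ ≤
          (L * ‖M k (u k - z)‖) * (L * ‖M k (u k - z)‖) :=
        mul_self_le_mul_self (norm_nonneg _) hB
      have hns := psd_norm_sq (hsa k) (hpsd k) (u k - z)
      have hCk : ‖M k‖ * b k ≤ C₀ * b k :=
        mul_le_mul_of_nonneg_right (hC₀ k) (hbnn k)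
      nlinarith [h1, hns, hCk, sq_nonneg (‖M k (u k - z)‖)]
    have hrec : ∀ k, b (k + 1) ≤ b k * (1 + ε k) := by
      intro k
      set wk := u (k + 1) - z with hwk
      have hsplit : ⟪M (k + 1) wk, wk⟫_ℝ = ⟪M k wk, wk⟫_ℝ + ⟪(M (k + 1) - M k) wk, wk⟫_ℝ := by
        rw [ContinuousLinearMap.sub_apply, inner_sub_left]; ring
      have habs : ⟪(M (k + 1) - M k) wk, wk⟫_ℝ ≤ ‖M (k + 1) - M k‖ * ‖wk‖ ^ 2 := by
        calc ⟪(M (k + 1) - M k) wk, wk⟫_ℝ ≤ ‖(M (k + 1) - M k) wk‖ * ‖wk‖ :=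
              real_inner_le_norm _ _
          _ ≤ ‖M (k + 1) - M k‖ * ‖wk‖ ^ 2 := by
              have := (M (k + 1) - M k).le_opNorm wk
              nlinarith [norm_nonneg wk]
      have hA := hstepA z hz k
      have hd := mul_le_mul_of_nonneg_left (hw2 k) (norm_nonneg (M (k + 1) - M k))
      have : b (k + 1) = ⟪M (k + 1) wk, wk⟫_ℝ := rfl
      rw [this, hsplit]
      have : b k * (1 + ε k) = b k + L ^ 2 * C₀ * ‖M (k + 1) - M k‖ * b k := by
        rw [hε]; ring
      rw [this]
      nlinarith [hA, habs, hd]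
    exact ⟨(quasi_fejer b ε hbnn hεnn hεsum hrec).1,
      ⟨b 0 * Real.exp (∑' j, ε j), (quasi_fejer b ε hbnn hεnn hεsum hrec).2⟩⟩
  -- boundedness of the sequence u
  obtain ⟨R, hR⟩ : ∃ R, ∀ k, ‖u k‖ ≤ R := by
    obtain ⟨B, hB⟩ := (main z0 hz0).2
    refine ⟨max ‖u 0‖ (‖z0‖ + Real.sqrt (L ^ 2 * C₀ * B)), fun k => ?_⟩
    cases k with
    | zero => exact le_max_left _ _
    | succ k =>
      have h1 : ‖u (k + 1) - z0‖ ^ 2 ≤ L ^ 2 * C₀ * B := by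
        have hB2 := hstepB z0 hz0 k
        have hns := psd_norm_sq (hsa k) (hpsd k) (u k - z0)
        have hCk : ‖M k‖ * ⟪M k (u k - z0), u k - z0⟫_ℝ ≤ C₀ * B := by
          have := hB k
          have := hpsd k (u k - z0)
          nlinarith [hC₀ k, norm_nonneg (M k)]
        nlinarith [mul_self_le_mul_self (norm_nonneg (u (k + 1) - z0)) hB2,
          sq_nonneg (‖M k (u k - z0)‖)]
      have h2 : ‖u (k + 1) - z0‖ ≤ Real.sqrt (L ^ 2 * C₀ * B) := by
        rw [← Real.sqrt_sq (norm_nonneg (u (k + 1) - z0))]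
        exact Real.sqrt_le_sqrt h1
      have h3 : ‖u (k + 1)‖ ≤ ‖z0‖ + ‖u (k + 1) - z0‖ := by
        have := norm_add_le z0 (u (k + 1) - z0)
        simpa [add_sub_cancel] using this
      exact le_trans (by linarith) (le_max_right _ _)
  have hRnn : 0 ≤ R := le_trans (norm_nonneg _) (hR 0)
  -- operator norm difference tends to 0
  have hMdiff : Tendsto (fun k => ‖M k - Mlim‖) atTop (𝓝 0) :=
    tendsto_iff_norm_sub_tendsto_zero.mp hconv
  -- limits in the Mlim metric for any zero z
  have hlimM : ∀ z : H, (0 : H) ∈ T z →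
      ∃ r, Tendsto (fun k => ⟪Mlim (u k - z), u k - z⟫_ℝ) atTop (𝓝 r) := by
    intro z hz
    obtain ⟨⟨r, hr⟩, -⟩ := main z hz
    have hdiff0 : Tendsto (fun k => ⟪M k (u k - z), u k - z⟫_ℝ -
        ⟪Mlim (u k - z), u k - z⟫_ℝ) atTop (𝓝 0) := by
      apply squeeze_zero_norm (a := fun k => ‖M k - Mlim‖ * (R + ‖z‖) ^ 2)
      · intro k
        have he : ⟪M k (u k - z), u k - z⟫_ℝ - ⟪Mlim (u k - z), u k - z⟫_ℝ =
            ⟪(M k - Mlim) (u k - z), u k - z⟫_ℝ := by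
          rw [ContinuousLinearMap.sub_apply, inner_sub_left]
        rw [he, Real.norm_eq_abs]
        have h1 : |⟪(M k - Mlim) (u k - z), u k - z⟫_ℝ| ≤ ‖(M k - Mlim) (u k - z)‖ * ‖u k - z‖ :=
          abs_real_inner_le_norm _ _
        have h2 := (M k - Mlim).le_opNorm (u k - z)
        have h3 : ‖u k - z‖ ≤ R + ‖z‖ := le_trans (norm_sub_le _ _) (by linarith [hR k])
        have h4 : ‖(M k - Mlim) (u k - z)‖ * ‖u k - z‖ ≤
            (‖M k - Mlim‖ * (R + ‖z‖)) * (R + ‖z‖) := by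
          apply mul_le_mul _ h3 (norm_nonneg _) (by positivity)
          exact le_trans h2 (mul_le_mul_of_nonneg_left h3 (norm_nonneg _))
        calc |⟪(M k - Mlim) (u k - z), u k - z⟫_ℝ| ≤
              ‖(M k - Mlim) (u k - z)‖ * ‖u k - z‖ := h1
          _ ≤ (‖M k - Mlim‖ * (R + ‖z‖)) * (R + ‖z‖) := h4
          _ = ‖M k - Mlim‖ * (R + ‖z‖) ^ 2 := by ring
      · simpa using hMdiff.mul_const ((R + ‖z‖) ^ 2)
    refine ⟨r, ?_⟩
    have := hr.sub hdiff0
    simp only [sub_zero] at this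
    refine this.congr (fun k => by ring)
  -- cluster points are zeros of T
  have hcpz : ∀ v : H, WeakClusterPt u v → (0 : H) ∈ T v := by
    intro v hv
    have hfix := hcluster v hv
    have h := hJlim v
    rw [hfix, sub_self] at h
    exact h
  -- pointwise convergence M k x → Mlim x
  have hMpt : ∀ x : H, Tendsto (fun k => M k x) atTop (𝓝 (Mlim x)) := by
    intro x
    rw [tendsto_iff_norm_sub_tendsto_zero]
    apply squeeze_zero_norm (a := fun k => ‖M k - Mlim‖ * ‖x‖)
    · intro k
      have := (M k - Mlim).le_opNorm x
      simpa [ContinuousLinearMap.sub_apply] using this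
    · simpa using hMdiff.mul_const ‖x‖
  -- uniqueness of weak cluster points
  have huniq : ∀ v w : H, WeakClusterPt u v → WeakClusterPt u w → v = w := by
    intro v w hv hw
    have hzv := hcpz v hv
    have hzw := hcpz w hw
    obtain ⟨rv, hrv⟩ := hlimM v hzv
    obtain ⟨rw', hrw⟩ := hlimM w hzw
    set y : H := Mlim v - Mlim w with hy
    have hdiff : ∀ k, ⟪Mlim (u k - v), u k - v⟫_ℝ - ⟪Mlim (u k - w), u k - w⟫_ℝ =
        -2 * ⟪u k, y⟫_ℝ + (⟪Mlim v, v⟫_ℝ - ⟪Mlim w, w⟫_ℝ) := by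
      intro k
      have e1 : ⟪Mlim (u k), v⟫_ℝ = ⟪u k, Mlim v⟫_ℝ := sa_inner hsalim _ _
      have e2 : ⟪Mlim (u k), w⟫_ℝ = ⟪u k, Mlim w⟫_ℝ := sa_inner hsalim _ _
      have e3 : ⟪Mlim v, u k⟫_ℝ = ⟪u k, Mlim v⟫_ℝ := real_inner_comm _ _
      have e4 : ⟪Mlim w, u k⟫_ℝ = ⟪u k, Mlim w⟫_ℝ := real_inner_comm _ _
      simp only [map_sub, inner_sub_left, inner_sub_right, hy]
      rw [e1, e2, e3, e4]
      ring
    have key : ∀ (p : H), WeakClusterPt u p →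
        rv - rw' = -2 * ⟪p, y⟫_ℝ + (⟪Mlim v, v⟫_ℝ - ⟪Mlim w, w⟫_ℝ) := by
      rintro p ⟨φ, hφ, hwc⟩
      have t1 : Tendsto (fun n => ⟪Mlim (u (φ n) - v), u (φ n) - v⟫_ℝ -
          ⟪Mlim (u (φ n) - w), u (φ n) - w⟫_ℝ) atTop (𝓝 (rv - rw')) :=
        (hrv.comp hφ.tendsto_atTop).sub (hrw.comp hφ.tendsto_atTop)
      have t2 : Tendsto (fun n => -2 * ⟪u (φ n), y⟫_ℝ +
          (⟪Mlim v, v⟫_ℝ - ⟪Mlim w, w⟫_ℝ)) atTop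
          (𝓝 (-2 * ⟪p, y⟫_ℝ + (⟪Mlim v, v⟫_ℝ - ⟪Mlim w, w⟫_ℝ))) :=
        ((hwc y).const_mul (-2)).add_const _
      refine tendsto_nhds_unique (t1.congr (fun n => hdiff (φ n))) t2
    obtain ⟨φv, hφv, hwcv⟩ := hv
    obtain ⟨φw, hφw, hwcw⟩ := hw
    have kv := key v ⟨φv, hφv, hwcv⟩
    have kw := key w ⟨φw, hφw, hwcw⟩
    have hinner : ⟪v - w, y⟫_ℝ = 0 := by
      rw [inner_sub_left]; linarith
    have hyz : Mlim (v - w) = 0 := by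
      have h0 : ⟪Mlim (v - w), v - w⟫_ℝ = 0 := by
        rw [real_inner_comm]
        rw [show Mlim (v - w) = y by rw [map_sub]]
        exact hinner
      have hn := psd_norm_sq hsalim hpsdlim (v - w)
      rw [h0, mul_zero] at hn
      have : ‖Mlim (v - w)‖ = 0 := by nlinarith [norm_nonneg (Mlim (v - w))]
      exact norm_eq_zero.mp this
    have hvw : ∀ k, ‖v - w‖ ≤ L * ‖M k (v - w)‖ := by
      intro k
      have h1 : M k v - M k v ∈ T v := by simpa [sub_self] using hzv
      have h2 : M k w - M k w ∈ T w := by simpa [sub_self] using hzw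
      have := hLip k (M k v) (M k w) v w h1 h2
      rwa [← map_sub] at this
    have htend : Tendsto (fun k => L * ‖M k (v - w)‖) atTop (𝓝 (L * ‖Mlim (v - w)‖)) :=
      ((continuous_norm.tendsto _).comp (hMpt (v - w))).const_mul L
    have hle : ‖v - w‖ ≤ L * ‖Mlim (v - w)‖ :=
      ge_of_tendsto htend (Eventually.of_forall hvw)
    rw [hyz, norm_zero, mul_zero] at hle
    have : v - w = 0 := norm_le_zero_iff.mp hle
    exact sub_eq_zero.mp this
  -- existence of a weak cluster point
  obtain ⟨l, φ, hφ, hwl⟩ := weak_seq_compact u R hR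
  have hcll : WeakClusterPt u l := ⟨φ, hφ, fun w => hwl w⟩
  refine ⟨l, hcpz l hcll, ?_⟩
  intro w
  apply Filter.tendsto_of_subseq_tendsto
  intro ns hns
  obtain ⟨ms, hms1, hms2⟩ := strictMono_subseq_of_tendsto_atTop hns
  obtain ⟨v, ψ, hψ, hvconv⟩ := weak_seq_compact (fun n => u (ns (ms n))) R (fun n => hR _)
  have hclv : WeakClusterPt u v := ⟨(ns ∘ ms) ∘ ψ, hms2.comp hψ, fun w' => hvconv w'⟩
  have hvl : v = l := huniq v l hclv hcll
  exact ⟨ms ∘ ψ, by simpa [hvl] using hvconv w⟩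
end

section
/- If M and M' are bounded linear self-adjoint positive semi-definite operators on H and J^M, J^{M'} denote the corresponding preconditioned resolvents of T with the same set of fixed points, and Mu* = Mu** for two fixed points u*, u** of J^M := (M+T)⁻¹M (single-valued), then u* = u**. -/
open scoped InnerProductSpace

/-- Two fixed points u*, u** of the single-valued preconditioned resolvent
J^M = (M+T)⁻¹M with M u* = M u** coincide. -/
theorem stmt7 {H : Type} [NormedAddCommGroup H] [InnerProductSpace ℝ H] [CompleteSpace H]
    (M : H →L[ℝ] H) (hsa : IsSelfAdjoint M) (hpsd : ∀ x : H, 0 ≤ ⟪M x, x⟫_ℝ)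
    (T : H → Set H) (J : H → H)
    -- J = (M+T)⁻¹M has full domain and is single-valued:
    (hJ : ∀ x : H, M x - M (J x) ∈ T (J x))
    (hJuniq : ∀ x v : H, M x - M v ∈ T v → v = J x)
    (ustar ustar2 : H)
    (hfix1 : J ustar = ustar) (hfix2 : J ustar2 = ustar2)
    (hMeq : M ustar = M ustar2) :
    ustar = ustar2 := by
  have h0 : M ustar2 - M (J ustar2) ∈ T (J ustar2) := hJ ustar2
  rw [hfix2] at h0
  have h1 : M ustar - M ustar2 ∈ T ustar2 := by rwa [hMeq]
  have := hJuniq ustar ustar2 h1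
  rw [hfix1] at this
  exact this.symm
end

section
/- Let A, B : H ⇉ H be maximal monotone with zer(A+B) ≠ ∅, and let (t_k) be a sequence of positive reals with t_k → t > 0 and ∑_k |t_{k+1} − t_k| < ∞. Then for the non-stationary Douglas–Rachford iteration w^{k+1} = w^k + J_{t_k B}(2 J_{t_k A} w^k − w^k) − J_{t_k A} w^k, the sequence (J_{t_k A} w^k) converges weakly to some x ∈ zer(A+B). -/
open scoped InnerProductSpace
open Filter

section Aux
variable {H : Type} [NormedAddCommGroup H] [InnerProductSpace ℝ H]
variable {M : H → Set H}

/-- monotonicity abbreviation -/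
def Mono (M : H → Set H) : Prop :=
  ∀ u₁ v₁ u₂ v₂ : H, v₁ ∈ M u₁ → v₂ ∈ M u₂ → 0 ≤ ⟪u₁ - u₂, v₁ - v₂⟫_ℝ

lemma res_firm (hm : Mono M) {s : ℝ} (hs : 0 < s) {x y u v : H}
    (hu : s⁻¹ • (x - u) ∈ M u) (hv : s⁻¹ • (y - v) ∈ M v) :
    ‖u - v‖ ^ 2 ≤ ⟪u - v, x - y⟫_ℝ := by
  have h := hm u _ v _ hu hv
  rw [← smul_sub, real_inner_smul_right] at h
  have h2 : 0 ≤ ⟪u - v, x - u - (y - v)⟫_ℝ := by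
    have := (mul_nonneg_iff_of_pos_left (inv_pos.mpr hs)).mp h
    exact this
  have e : x - u - (y - v) = (x - y) - (u - v) := by abel
  rw [e, inner_sub_right, real_inner_self_eq_norm_sq] at h2
  linarith

lemma res_nonexp (hm : Mono M) {s : ℝ} (hs : 0 < s) {x y u v : H}
    (hu : s⁻¹ • (x - u) ∈ M u) (hv : s⁻¹ • (y - v) ∈ M v) :
    ‖u - v‖ ≤ ‖x - y‖ := by
  have h := res_firm hm hs hu hv
  have h2 : ⟪u - v, x - y⟫_ℝ ≤ ‖u - v‖ * ‖x - y‖ := real_inner_le_norm _ _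
  nlinarith [norm_nonneg (u - v), norm_nonneg (x - y)]

lemma res_unique (hm : Mono M) {s : ℝ} (hs : 0 < s) {x u v : H}
    (hu : s⁻¹ • (x - u) ∈ M u) (hv : s⁻¹ • (x - v) ∈ M v) : u = v := by
  have h := res_firm hm hs hu hv
  simp only [sub_self, inner_zero_right] at h
  have : ‖u - v‖ = 0 := by nlinarith [norm_nonneg (u - v)]
  rwa [norm_sub_eq_zero_iff] at this

/-- reflection nonexpansive -/
lemma res_reflect (hm : Mono M) {s : ℝ} (hs : 0 < s) {x y u v : H}
    (hu : s⁻¹ • (x - u) ∈ M u) (hv : s⁻¹ • (y - v) ∈ M v) :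
    ‖(2 • u - x) - (2 • v - y)‖ ≤ ‖x - y‖ := by
  have h := res_firm hm hs hu hv
  have e : (2 • u - x) - (2 • v - y) = (2:ℝ) • (u - v) - (x - y) := by
    push_cast [two_smul]; abel
  have : ‖(2 • u - x) - (2 • v - y)‖ ^ 2 ≤ ‖x - y‖ ^ 2 := by
    rw [e, norm_sub_sq_real, real_inner_smul_left, norm_smul]
    simp only [Real.norm_ofNat]
    nlinarith [norm_nonneg (u - v)]
  nlinarith [norm_nonneg ((2 • u - x) - (2 • v - y)), norm_nonneg (x - y)]

/-- parameter comparison of resolvents at the same point -/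
lemma res_param (hm : Mono M) {s r : ℝ} (hs : 0 < s) (hr : 0 < r) {x u v : H}
    (hu : s⁻¹ • (x - u) ∈ M u) (hv : r⁻¹ • (x - v) ∈ M v) :
    ‖u - v‖ ≤ (|s - r| / r) * ‖x - v‖ := by
  have h := hm u _ v _ hu hv
  have e : s⁻¹ • (x - u) - r⁻¹ • (x - v) = (-s⁻¹) • (u - v) + (s⁻¹ - r⁻¹) • (x - v) := by
    module
  rw [e, inner_add_right, real_inner_smul_right, real_inner_smul_right,
    real_inner_self_eq_norm_sq] at h
  have hp := abs_le.mp (abs_real_inner_le_norm (u - v) (x - v))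
  have h' : 0 ≤ s * r * (-s⁻¹ * ‖u - v‖ ^ 2 + (s⁻¹ - r⁻¹) * ⟪u - v, x - v⟫_ℝ) :=
    mul_nonneg (mul_pos hs hr).le h
  have hsne := ne_of_gt hs
  have hrne := ne_of_gt hr
  have key3 : r * ‖u - v‖ ^ 2 ≤ |s - r| * (‖u - v‖ * ‖x - v‖) := by
    have e2 : s * r * (-s⁻¹ * ‖u - v‖ ^ 2 + (s⁻¹ - r⁻¹) * ⟪u - v, x - v⟫_ℝ)
        = -(r * ‖u - v‖ ^ 2) + (r - s) * ⟪u - v, x - v⟫_ℝ := by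
      field_simp
    rw [e2] at h'
    rcases abs_cases (s - r) with ⟨he, _⟩ | ⟨he, _⟩ <;> nlinarith [hp.1, hp.2]
  rw [div_mul_eq_mul_div, le_div_iff₀ hr]
  rcases eq_or_lt_of_le (norm_nonneg (u - v)) with h0 | h0
  · rw [← h0, zero_mul]; positivity
  · nlinarith [key3, h0, norm_nonneg (x - v)]


lemma avg_ineq (a b : H) (hba : ‖b‖ ≤ ‖a‖) :
    ‖(1/2:ℝ) • (a+b)‖^2 + ‖(1/2:ℝ) • (a-b)‖^2 ≤ ‖a‖^2 := by
  have hp := parallelogram_law_with_norm ℝ a b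
  rw [norm_smul, norm_smul]
  have h2 : ‖(1/2:ℝ)‖ = 1/2 := by rw [Real.norm_eq_abs]; norm_num
  rw [h2]
  nlinarith [norm_nonneg a, norm_nonneg b, norm_nonneg (a+b), norm_nonneg (a-b)]

lemma DR_firm {A B : H → Set H} (hmA : Mono A) (hmB : Mono B) {s : ℝ} (hs : 0 < s)
    {x x' u u' v v' : H}
    (hu : s⁻¹ • (x - u) ∈ A u) (hu' : s⁻¹ • (x' - u') ∈ A u')
    (hv : s⁻¹ • ((2 • u - x) - v) ∈ B v) (hv' : s⁻¹ • ((2 • u' - x') - v') ∈ B v') :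
    ‖(x + v - u) - (x' + v' - u')‖^2 + ‖(u - v) - (u' - v')‖^2 ≤ ‖x - x'‖^2 := by
  have hb1 := res_reflect hmB hs hv hv'
  have hb2 := res_reflect hmA hs hu hu'
  have hba : ‖(2 • v - (2 • u - x)) - (2 • v' - (2 • u' - x'))‖ ≤ ‖x - x'‖ :=
    le_trans hb1 hb2
  have e1 : (x + v - u) - (x' + v' - u')
      = (1/2:ℝ) • ((x - x') + ((2 • v - (2 • u - x)) - (2 • v' - (2 • u' - x')))) := by
    simp only [two_smul]; module
  have e2 : (u - v) - (u' - v')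
      = (1/2:ℝ) • ((x - x') - ((2 • v - (2 • u - x)) - (2 • v' - (2 • u' - x')))) := by
    simp only [two_smul]; module
  rw [e1, e2]
  exact avg_ineq _ _ hba


end Aux

section WeakCompact
variable {H : Type} [NormedAddCommGroup H] [InnerProductSpace ℝ H] [CompleteSpace H]

lemma weak_compact (x : ℕ → H) (C : ℝ) (hC : ∀ k, ‖x k‖ ≤ C) :
    ∃ (p : H) (φ : ℕ → ℕ), StrictMono φ ∧
      ∀ z : H, Tendsto (fun k => ⟪x (φ k), z⟫_ℝ) atTop (nhds ⟪p, z⟫_ℝ) := by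
  have hC0 : 0 ≤ C := le_trans (norm_nonneg _) (hC 0)
  set S : Set (ℕ → ℝ) := Set.pi Set.univ (fun j => Set.Icc (-(C * ‖x j‖)) (C * ‖x j‖)) with hS
  have hScomp : IsCompact S := isCompact_univ_pi (fun j => isCompact_Icc)
  have hmem : ∀ k, (fun j => ⟪x k, x j⟫_ℝ) ∈ S := by
    intro k j _
    have h1 := abs_real_inner_le_norm (x k) (x j)
    have h2 : ‖x k‖ * ‖x j‖ ≤ C * ‖x j‖ := mul_le_mul_of_nonneg_right (hC k) (norm_nonneg _)
    exact abs_le.mp (h1.trans h2)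
  obtain ⟨L, _, φ, hφ, hconv⟩ := hScomp.isSeqCompact hmem
  have hcoord : ∀ j, Tendsto (fun k => ⟪x (φ k), x j⟫_ℝ) atTop (nhds (L j)) := by
    intro j; exact tendsto_pi_nhds.mp hconv j
  set G : Set H := {y | ∃ l, Tendsto (fun k => ⟪x (φ k), y⟫_ℝ) atTop (nhds l)} with hG
  have hGspan : ∀ y ∈ Submodule.span ℝ (Set.range x), y ∈ G := by
    intro y hy
    refine Submodule.span_induction ?_ ?_ ?_ ?_ hy
    · rintro _ ⟨j, rfl⟩; exact ⟨L j, hcoord j⟩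
    · exact ⟨0, by simp only [inner_zero_right]; exact tendsto_const_nhds⟩
    · rintro a b _ _ ⟨la, hla⟩ ⟨lb, hlb⟩
      exact ⟨la + lb, by simpa only [inner_add_right] using hla.add hlb⟩
    · rintro r a _ ⟨la, hla⟩
      exact ⟨r * la, by simpa only [real_inner_smul_right] using hla.const_mul r⟩
  have hGlim : ∀ y : H, (∀ ε > 0, ∃ y' ∈ G, ‖y - y'‖ < ε) → y ∈ G := by
    intro y happ
    have hcau : CauchySeq (fun k => ⟪x (φ k), y⟫_ℝ) := by
      rw [Metric.cauchySeq_iff]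
      intro ε hε
      obtain ⟨y', hy'G, hy'⟩ := happ (ε / (4 * (C + 1))) (by positivity)
      obtain ⟨l, hl⟩ := hy'G
      obtain ⟨N, hN⟩ := (Metric.cauchySeq_iff.mp hl.cauchySeq) (ε/2) (by positivity)
      refine ⟨N, fun m hm n hn => ?_⟩
      have hd := hN m hm n hn
      rw [Real.dist_eq] at hd ⊢
      have e1 : ⟪x (φ m), y⟫_ℝ - ⟪x (φ n), y⟫_ℝ
          = (⟪x (φ m) - x (φ n), y - y'⟫_ℝ) + (⟪x (φ m), y'⟫_ℝ - ⟪x (φ n), y'⟫_ℝ) := by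
        rw [inner_sub_left, inner_sub_right, inner_sub_right]; ring
      have h2 : |⟪x (φ m) - x (φ n), y - y'⟫_ℝ| ≤ (2*C) * (ε / (4 * (C + 1))) := by
        refine le_trans (abs_real_inner_le_norm _ _) ?_
        have hn1 : ‖x (φ m) - x (φ n)‖ ≤ 2*C := by
          calc ‖x (φ m) - x (φ n)‖ ≤ ‖x (φ m)‖ + ‖x (φ n)‖ := norm_sub_le _ _
            _ ≤ 2*C := by linarith [hC (φ m), hC (φ n)]
        exact mul_le_mul hn1 hy'.le (norm_nonneg _) (by linarith)
      have h3 : (2*C) * (ε / (4 * (C + 1))) ≤ ε/2 := by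
        have hc1 : (0:ℝ) < C + 1 := by linarith
        calc (2*C) * (ε / (4 * (C + 1))) ≤ (2*(C+1)) * (ε / (4 * (C + 1))) := by
              apply mul_le_mul_of_nonneg_right (by linarith) (by positivity)
          _ = ε/2 := by field_simp; ring
      calc |⟪x (φ m), y⟫_ℝ - ⟪x (φ n), y⟫_ℝ|
          ≤ |⟪x (φ m) - x (φ n), y - y'⟫_ℝ| + |⟪x (φ m), y'⟫_ℝ - ⟪x (φ n), y'⟫_ℝ| := by
            rw [e1]; exact abs_add_le _ _
        _ < ε := by linarith
    obtain ⟨l, hl⟩ := cauchySeq_tendsto_of_complete hcau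
    exact ⟨l, hl⟩
  -- every z has a limit, via orthogonal projection onto the closure of the span
  set K := (Submodule.span ℝ (Set.range x)).topologicalClosure with hK
  haveI : CompleteSpace K :=
    (Submodule.span ℝ (Set.range x)).isClosed_topologicalClosure.completeSpace_coe
  have hxK : ∀ k, x k ∈ K := fun k =>
    Submodule.le_topologicalClosure _ (Submodule.subset_span (Set.mem_range_self k))
  have hKG : ∀ y ∈ K, y ∈ G := by
    intro y hy
    have hy' : y ∈ closure ((Submodule.span ℝ (Set.range x) : Submodule ℝ H) : Set H) := hy
    refine hGlim y ?_
    intro ε hε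
    obtain ⟨y', hy'mem, hdy⟩ := Metric.mem_closure_iff.mp hy' ε hε
    exact ⟨y', hGspan y' hy'mem, by rwa [dist_eq_norm] at hdy⟩
  have hall : ∀ z : H, ∃ l, Tendsto (fun k => ⟪x (φ k), z⟫_ℝ) atTop (nhds l) := by
    intro z
    have hperp : z - (K.orthogonalProjectionOnto z : H) ∈ Kᗮ :=
      Submodule.sub_starProjection_mem_orthogonal (K := K) z
    have hzero : ∀ k, ⟪x (φ k), z - (K.orthogonalProjectionOnto z : H)⟫_ℝ = 0 := fun k =>
      (Submodule.mem_orthogonal K _).mp hperp _ (hxK (φ k))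
    have heq : ∀ k, ⟪x (φ k), z⟫_ℝ = ⟪x (φ k), (K.orthogonalProjectionOnto z : H)⟫_ℝ := by
      intro k
      have := hzero k
      rw [inner_sub_right] at this
      linarith
    obtain ⟨l, hl⟩ := hKG _ (K.orthogonalProjectionOnto z).2
    exact ⟨l, by simpa only [heq] using hl⟩
  -- build the limit functional
  set f : H → ℝ := fun z => (hall z).choose with hf
  have hfl : ∀ z, Tendsto (fun k => ⟪x (φ k), z⟫_ℝ) atTop (nhds (f z)) := fun z =>
    (hall z).choose_spec
  have hadd : ∀ a b : H, f (a + b) = f a + f b := by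
    intro a b
    refine tendsto_nhds_unique (hfl (a+b)) ?_
    simpa only [inner_add_right] using (hfl a).add (hfl b)
  have hsmul : ∀ (r : ℝ) (a : H), f (r • a) = r * f a := by
    intro r a
    refine tendsto_nhds_unique (hfl (r • a)) ?_
    simpa only [real_inner_smul_right] using (hfl a).const_mul r
  have hbound : ∀ z, ‖f z‖ ≤ C * ‖z‖ := by
    intro z
    rw [Real.norm_eq_abs]
    refine le_of_tendsto (hfl z).abs (Filter.Eventually.of_forall (fun k => ?_))
    refine le_trans (abs_real_inner_le_norm _ _) ?_
    exact mul_le_mul_of_nonneg_right (hC (φ k)) (norm_nonneg _)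
  set Flin : H →ₗ[ℝ] ℝ := { toFun := f, map_add' := hadd, map_smul' := hsmul } with hFlin
  set F : H →L[ℝ] ℝ := LinearMap.mkContinuous Flin C hbound with hF
  set p : H := (InnerProductSpace.toDual ℝ H).symm F with hp
  refine ⟨p, φ, hφ, fun z => ?_⟩
  have : ⟪p, z⟫_ℝ = F z := by
    rw [hp]
    have := InnerProductSpace.toDual_apply_apply (𝕜 := ℝ)
      (x := (InnerProductSpace.toDual ℝ H).symm F) (y := z)
    rw [← this, LinearIsometryEquiv.apply_symm_apply]
  rw [this]
  exact hfl z

end WeakCompact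

section ResLimit
variable {H : Type} [NormedAddCommGroup H] [InnerProductSpace ℝ H] [CompleteSpace H]

lemma res_limit {M : H → Set H} (hm : Mono M) (t : ℕ → ℝ) (ht : ∀ k, 0 < t k)
    {tlim : ℝ} (htlim : 0 < tlim) (htconv : Tendsto t atTop (nhds tlim))
    (J : ℕ → H → H) (hJ : ∀ k x, (t k)⁻¹ • (x - J k x) ∈ M (J k x))
    (z az : H) (haz : az ∈ M z) (x : H) :
    ∃ Lx : H, Tendsto (fun k => J k x) atTop (nhds Lx) := by
  -- anchor: J k (z + t k • az) = z
  have hanch : ∀ k, J k (z + t k • az) = z := by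
    intro k
    refine res_unique hm (ht k) (hJ k _) ?_
    have e : (t k)⁻¹ • ((z + t k • az) - z) = az := by
      rw [add_sub_cancel_left, smul_smul, inv_mul_cancel₀ (ne_of_gt (ht k)), one_smul]
    rw [e]; exact haz
  obtain ⟨Tmax, hTmax⟩ := htconv.bddAbove_range
  have hTmax' : ∀ k, t k ≤ Tmax := fun k => hTmax (Set.mem_range_self k)
  set Cx : ℝ := 2 * ‖x - z‖ + Tmax * ‖az‖ with hCx
  have hxJ : ∀ m, ‖x - J m x‖ ≤ Cx := by
    intro m
    have h1 : ‖J m x - z‖ ≤ ‖x - (z + t m • az)‖ := by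
      have := res_nonexp hm (ht m) (hJ m x) (hJ m (z + t m • az))
      rwa [hanch m] at this
    have h2 : ‖x - (z + t m • az)‖ ≤ ‖x - z‖ + t m * ‖az‖ := by
      have e : x - (z + t m • az) = (x - z) - t m • az := by abel
      rw [e]
      refine (norm_sub_le _ _).trans ?_
      rw [norm_smul, Real.norm_eq_abs, abs_of_pos (ht m)]
    have h3 : ‖x - J m x‖ ≤ ‖x - z‖ + ‖J m x - z‖ := by
      have e : x - J m x = (x - z) - (J m x - z) := by abel
      rw [e]; exact norm_sub_le _ _
    have h4 : t m * ‖az‖ ≤ Tmax * ‖az‖ :=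
      mul_le_mul_of_nonneg_right (hTmax' m) (norm_nonneg _)
    rw [hCx]; linarith
  have hCx0 : 0 ≤ Cx := le_trans (norm_nonneg _) (hxJ 0)
  have hcau : CauchySeq (fun k => J k x) := by
    rw [Metric.cauchySeq_iff]
    intro ε hε
    have hhalf : ∀ᶠ n in atTop, tlim / 2 < t n :=
      htconv.eventually (lt_mem_nhds (by linarith : tlim / 2 < tlim))
    obtain ⟨N1, hN1⟩ := eventually_atTop.mp hhalf
    set ε' : ℝ := ε * tlim / (2 * (Cx + 1)) with hε'
    have hε'pos : 0 < ε' := by positivity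
    obtain ⟨N2, hN2⟩ := Metric.cauchySeq_iff.mp htconv.cauchySeq ε' hε'pos
    refine ⟨max N1 N2, fun m hmge n hnge => ?_⟩
    have hm1 := le_trans (le_max_left N1 N2) hmge
    have hn1 := le_trans (le_max_left N1 N2) hnge
    have hm2 := le_trans (le_max_right N1 N2) hmge
    have hn2 := le_trans (le_max_right N1 N2) hnge
    have hdist := hN2 m hm2 n hn2
    rw [Real.dist_eq] at hdist
    have hrp := res_param hm (ht m) (ht n) (hJ m x) (hJ n x)
    have htn : tlim / 2 < t n := hN1 n hn1
    rw [dist_eq_norm]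
    have h5 : |t m - t n| / t n ≤ |t m - t n| * (2 / tlim) := by
      rw [div_eq_mul_inv]
      refine mul_le_mul_of_nonneg_left ?_ (abs_nonneg _)
      have h51 := one_div_le_one_div_of_le (by positivity : (0:ℝ) < tlim/2) htn.le
      rw [one_div_div] at h51
      rw [← one_div]
      exact h51
    have h6 : ‖J m x - J n x‖ ≤ |t m - t n| * (2 / tlim) * Cx := by
      refine hrp.trans ?_
      refine mul_le_mul ?_ (hxJ n) (norm_nonneg _) (by positivity)
      exact h5
    refine lt_of_le_of_lt h6 ?_
    have h7 : |t m - t n| * (2 / tlim) * Cx < ε' * (2 / tlim) * (Cx + 1) := by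
      have hq : (0:ℝ) < 2 / tlim := by positivity
      rcases eq_or_lt_of_le hCx0 with h0 | h0
      · rw [← h0, mul_zero]; positivity
      · refine mul_lt_mul ?_ (by linarith) h0 (by positivity)
        exact mul_lt_mul_of_pos_right hdist hq
    refine lt_of_lt_of_le h7 ?_
    have heq : ε' * (2 / tlim) * (Cx + 1) = ε := by
      rw [hε']
      have h1 : tlim ≠ 0 := ne_of_gt htlim
      have h2 : Cx + 1 ≠ 0 := by positivity
      field_simp
    exact le_of_eq heq
  exact cauchySeq_tendsto_of_complete hcau

lemma res_limit_mem {M : H → Set H} (hm : Mono M)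
    (hmax : ∀ u v : H, (∀ u' v' : H, v' ∈ M u' → 0 ≤ ⟪u - u', v - v'⟫_ℝ) → v ∈ M u)
    (t : ℕ → ℝ) (ht : ∀ k, 0 < t k)
    {tlim : ℝ} (htlim : 0 < tlim) (htconv : Tendsto t atTop (nhds tlim))
    (J : ℕ → H → H) (hJ : ∀ k x, (t k)⁻¹ • (x - J k x) ∈ M (J k x))
    {x Lx : H} (hL : Tendsto (fun k => J k x) atTop (nhds Lx)) :
    tlim⁻¹ • (x - Lx) ∈ M Lx := by
  refine hmax _ _ (fun u' v' hv' => ?_)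
  have hk : ∀ k, 0 ≤ ⟪J k x - u', (t k)⁻¹ • (x - J k x) - v'⟫_ℝ :=
    fun k => hm _ _ _ _ (hJ k x) hv'
  have htend : Tendsto (fun k => ⟪J k x - u', (t k)⁻¹ • (x - J k x) - v'⟫_ℝ) atTop
      (nhds ⟪Lx - u', tlim⁻¹ • (x - Lx) - v'⟫_ℝ) := by
    refine Filter.Tendsto.inner ?_ ?_
    · exact hL.sub tendsto_const_nhds
    · refine Filter.Tendsto.sub ?_ tendsto_const_nhds
      exact Filter.Tendsto.smul (htconv.inv₀ (ne_of_gt htlim))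
        (tendsto_const_nhds.sub hL)
  exact ge_of_tendsto htend (Filter.Eventually.of_forall hk)

end ResLimit

section Fejer
variable {H : Type} [NormedAddCommGroup H] [InnerProductSpace ℝ H]

set_option linter.unusedSectionVars false in
lemma fejer_limit {A B : H → Set H} (hmA : Mono A) (hmB : Mono B)
    (t : ℕ → ℝ) (ht : ∀ k, 0 < t k) {tlim : ℝ} (htlim : 0 < tlim)
    (htconv : Tendsto t atTop (nhds tlim)) (htsum : Summable (fun k => |t (k + 1) - t k|))
    (JA JB : ℕ → H → H)
    (hJA : ∀ k x, (t k)⁻¹ • (x - JA k x) ∈ A (JA k x))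
    (hJB : ∀ k x, (t k)⁻¹ • (x - JB k x) ∈ B (JB k x))
    (w : ℕ → H) (hw : ∀ k, w (k + 1) = w k + JB k (2 • JA k (w k) - w k) - JA k (w k))
    (z az : H) (haz : az ∈ A z) (hbz : -az ∈ B z) :
    (∃ ℓ : ℝ, Tendsto (fun k => ‖w k - (z + tlim • az)‖) atTop (nhds ℓ)) ∧
      Tendsto (fun k => ‖w (k + 1) - w k‖) atTop (nhds 0) := by
  set d : ℕ → ℝ := fun k => ‖w k - (z + t k • az)‖ with hd
  set c : ℕ → ℝ := fun k => |t (k + 1) - t k| * ‖az‖ with hcdef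
  have hc : Summable c := htsum.mul_right _
  have hcnn : ∀ k, 0 ≤ c k := fun k => mul_nonneg (abs_nonneg _) (norm_nonneg _)
  have hstep2 : ∀ k, ‖w (k+1) - (z + t k • az)‖^2 + ‖w (k+1) - w k‖^2 ≤ d k^2 := by
    intro k
    have hu' : (t k)⁻¹ • ((z + t k • az) - z) ∈ A z := by
      have e : (t k)⁻¹ • ((z + t k • az) - z) = az := by
        rw [add_sub_cancel_left, smul_smul, inv_mul_cancel₀ (ne_of_gt (ht k)), one_smul]
      rw [e]; exact haz
    have hv' : (t k)⁻¹ • ((2 • z - (z + t k • az)) - z) ∈ B z := by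
      have e : (t k)⁻¹ • ((2 • z - (z + t k • az)) - z) = -az := by
        have e2 : (2 • z - (z + t k • az)) - z = -(t k • az) := by
          simp only [two_smul]; abel
        rw [e2, smul_neg, smul_smul, inv_mul_cancel₀ (ne_of_gt (ht k)), one_smul]
      rw [e]; exact hbz
    have hJAz : JA k (z + t k • az) = z := res_unique hmA (ht k) (hJA k _) hu'
    have hJBz : JB k (2 • z - (z + t k • az)) = z := res_unique hmB (ht k) (hJB k _) hv'
    have hfirm := DR_firm hmA hmB (ht k) (hJA k (w k)) (hJA k (z + t k • az))
      (hJB k (2 • JA k (w k) - w k)) (hJB k (2 • JA k (z + t k • az) - (z + t k • az)))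
    rw [hJAz, hJBz] at hfirm
    have e1 : z + t k • az + z - z = z + t k • az := by abel
    have e2 : w k + JB k (2 • JA k (w k) - w k) - JA k (w k) = w (k+1) := (hw k).symm
    rw [e1, e2, sub_self, sub_zero] at hfirm
    have e3 : ‖JA k (w k) - JB k (2 • JA k (w k) - w k)‖ = ‖w (k+1) - w k‖ := by
      rw [← norm_neg]
      congr 1
      rw [hw k]; abel
    rw [e3] at hfirm
    exact hfirm
  have hstep : ∀ k, ‖w (k+1) - (z + t k • az)‖ ≤ d k := by
    intro k
    have h2 := hstep2 k
    nlinarith [norm_nonneg (w (k+1) - (z + t k • az)), norm_nonneg (w (k+1) - w k),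
      norm_nonneg (w k - (z + t k • az))]
  have hd1 : ∀ k, d (k+1) ≤ ‖w (k+1) - (z + t k • az)‖ + c k := by
    intro k
    have e : w (k+1) - (z + t (k+1) • az) = (w (k+1) - (z + t k • az)) + (t k - t (k+1)) • az := by
      rw [sub_smul]; abel
    have : d (k+1) = ‖(w (k+1) - (z + t k • az)) + (t k - t (k+1)) • az‖ := by rw [hd, ← e]
    rw [this]
    refine (norm_add_le _ _).trans ?_
    rw [norm_smul, Real.norm_eq_abs, abs_sub_comm]
  have hdc : ∀ k, d (k+1) ≤ d k + c k := fun k => (hd1 k).trans (add_le_add_left (hstep k) _)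
  set tail : ℕ → ℝ := fun k => ∑' j, c (j + k) with htaildef
  have htail0 : Tendsto tail atTop (nhds 0) := tendsto_sum_nat_add c
  have htailnn : ∀ k, 0 ≤ tail k := fun k => tsum_nonneg (fun j => hcnn _)
  have htailrec : ∀ k, tail k = c k + tail (k+1) := by
    intro k
    have hsk : Summable (fun j => c (j + k)) := (summable_nat_add_iff k).mpr hc
    rw [htaildef]
    simp only []
    rw [Summable.tsum_eq_zero_add hsk]
    congr 1
    · rw [zero_add]
    · apply tsum_congr
      intro j
      congr 1
      omega
  set D : ℕ → ℝ := fun k => d k + tail k with hDdef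
  have hDanti : Antitone D := by
    refine antitone_nat_of_succ_le (fun k => ?_)
    have h1 := hdc k
    have h2 := htailrec k
    simp only [hDdef]
    linarith
  have hDbdd : BddBelow (Set.range D) := by
    refine ⟨0, fun y hy => ?_⟩
    obtain ⟨k, rfl⟩ := hy
    have := norm_nonneg (w k - (z + t k • az))
    have := htailnn k
    simp only [hDdef]
    positivity
  have hDlim : Tendsto D atTop (nhds (⨅ k, D k)) := tendsto_atTop_ciInf hDanti hDbdd
  have hdlim : Tendsto d atTop (nhds (⨅ k, D k)) := by
    have h := hDlim.sub htail0
    simp only [hDdef, add_sub_cancel_right, sub_zero] at h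
    exact h
  -- error terms
  set ee : ℕ → ℝ := fun k => |t k - tlim| * ‖az‖ with heedef
  have hee0 : Tendsto ee atTop (nhds 0) := by
    have h1 : Tendsto (fun k => t k - tlim) atTop (nhds 0) := by
      simpa using htconv.sub (tendsto_const_nhds (x := tlim))
    have h2 := h1.abs
    rw [abs_zero] at h2
    simpa using h2.mul_const ‖az‖
  constructor
  · refine ⟨⨅ k, D k, ?_⟩
    have hub : ∀ k, ‖w k - (z + tlim • az)‖ ≤ d k + ee k := by
      intro k
      have e : w k - (z + tlim • az) = (w k - (z + t k • az)) + (t k - tlim) • az := by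
        rw [sub_smul]; abel
      rw [e]
      refine (norm_add_le _ _).trans ?_
      rw [norm_smul, Real.norm_eq_abs]
    have hlb : ∀ k, d k - ee k ≤ ‖w k - (z + tlim • az)‖ := by
      intro k
      have e : w k - (z + t k • az) = (w k - (z + tlim • az)) + (tlim - t k) • az := by
        rw [sub_smul]; abel
      have h1 : d k ≤ ‖w k - (z + tlim • az)‖ + ee k := by
        rw [hd]
        simp only []
        rw [e]
        refine (norm_add_le _ _).trans ?_
        rw [norm_smul, Real.norm_eq_abs, abs_sub_comm]
      linarith
    have hlo : Tendsto (fun k => d k - ee k) atTop (nhds (⨅ k, D k)) := by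
      simpa using hdlim.sub hee0
    have hhi : Tendsto (fun k => d k + ee k) atTop (nhds (⨅ k, D k)) := by
      simpa using hdlim.add hee0
    exact tendsto_of_tendsto_of_tendsto_of_le_of_le hlo hhi hlb hub
  · -- asymptotic regularity
    have hc0 : Tendsto c atTop (nhds 0) := hc.tendsto_atTop_zero
    have hEk2 : ∀ k, ‖w (k+1) - w k‖^2 ≤ d k^2 - d (k+1)^2 + c k * (d (k+1) + d k) := by
      intro k
      have h2 := hstep2 k
      have h3 := hd1 k
      have h4 := hstep k
      have h5 : 0 ≤ ‖w (k+1) - (z + t k • az)‖ := norm_nonneg _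
      have h6 : 0 ≤ d (k+1) := norm_nonneg _
      have hmul : (d (k+1) - ‖w (k+1) - (z + t k • az)‖) * (d (k+1) + ‖w (k+1) - (z + t k • az)‖)
          ≤ c k * (d (k+1) + ‖w (k+1) - (z + t k • az)‖) :=
        mul_le_mul_of_nonneg_right (by linarith) (by linarith)
      have hcs : c k * ‖w (k+1) - (z + t k • az)‖ ≤ c k * d k :=
        mul_le_mul_of_nonneg_left h4 (hcnn k)
      nlinarith
    have hrhs : Tendsto (fun k => d k^2 - d (k+1)^2 + c k * (d (k+1) + d k)) atTop (nhds 0) := by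
      have hds : Tendsto (fun k => d (k+1)) atTop (nhds (⨅ k, D k)) :=
        hdlim.comp (tendsto_add_atTop_nat 1)
      have h1 : Tendsto (fun k => d k^2) atTop (nhds ((⨅ k, D k)^2)) := hdlim.pow 2
      have h2 : Tendsto (fun k => d (k+1)^2) atTop (nhds ((⨅ k, D k)^2)) := hds.pow 2
      have h3 : Tendsto (fun k => c k * (d (k+1) + d k)) atTop (nhds 0) := by
        have := hc0.mul (hds.add hdlim)
        simpa using this
      have := (h1.sub h2).add h3
      simpa using this
    have hsq : Tendsto (fun k => ‖w (k+1) - w k‖^2) atTop (nhds 0) :=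
      squeeze_zero (fun k => by positivity) hEk2 hrhs
    have heq : (fun k => ‖w (k+1) - w k‖) = fun k => Real.sqrt (‖w (k+1) - w k‖^2) :=
      funext (fun k => (Real.sqrt_sq (norm_nonneg _)).symm)
    rw [heq]
    have := (Real.continuous_sqrt.tendsto 0).comp hsq
    simpa [Function.comp_def, Real.sqrt_zero] using this

end Fejer

/-- Convergence of the non-stationary Douglas–Rachford iteration with varying stepsizes. -/
theorem stmt13 {H : Type} [NormedAddCommGroup H] [InnerProductSpace ℝ H] [CompleteSpace H]
    (A B : H → Set H)
    -- A, B maximal monotone: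
    (hAmono : ∀ u₁ v₁ u₂ v₂ : H, v₁ ∈ A u₁ → v₂ ∈ A u₂ → 0 ≤ ⟪u₁ - u₂, v₁ - v₂⟫_ℝ)
    (hAmax : ∀ u v : H, (∀ u' v' : H, v' ∈ A u' → 0 ≤ ⟪u - u', v - v'⟫_ℝ) → v ∈ A u)
    (hBmono : ∀ u₁ v₁ u₂ v₂ : H, v₁ ∈ B u₁ → v₂ ∈ B u₂ → 0 ≤ ⟪u₁ - u₂, v₁ - v₂⟫_ℝ)
    (hBmax : ∀ u v : H, (∀ u' v' : H, v' ∈ B u' → 0 ≤ ⟪u - u', v - v'⟫_ℝ) → v ∈ B u)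
    -- zer(A+B) ≠ ∅:
    (hzer : ∃ x : H, ∃ a b : H, a ∈ A x ∧ b ∈ B x ∧ a + b = 0)
    -- stepsizes:
    (t : ℕ → ℝ) (ht : ∀ k, 0 < t k) (tlim : ℝ) (htlim : 0 < tlim)
    (htconv : Filter.Tendsto t Filter.atTop (nhds tlim))
    (htsum : Summable (fun k => |t (k + 1) - t k|))
    -- resolvents J_{t_k A} and J_{t_k B}: (1/t_k)(x − JA k x) ∈ A (JA k x), etc.
    (JA JB : ℕ → H → H)
    (hJA : ∀ k x, (t k)⁻¹ • (x - JA k x) ∈ A (JA k x))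
    (hJB : ∀ k x, (t k)⁻¹ • (x - JB k x) ∈ B (JB k x))
    -- the iteration:
    (w : ℕ → H)
    (hw : ∀ k, w (k + 1) = w k + JB k (2 • JA k (w k) - w k) - JA k (w k)) :
    ∃ x : H, (∃ a b : H, a ∈ A x ∧ b ∈ B x ∧ a + b = 0) ∧
      WeakConv (fun k => JA k (w k)) x := by
  obtain ⟨xs, as, bs, has, hbs0, hab⟩ := hzer
  have hbs : -as ∈ B xs := by
    have e : bs = -as := by
      have := hab
      rw [add_comm] at this
      exact eq_neg_of_add_eq_zero_left this
    rwa [e] at hbs0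
  have hmA : Mono A := hAmono
  have hmB : Mono B := hBmono
  -- limit resolvents
  choose JAL hJAL using fun x => res_limit hmA t ht htlim htconv JA hJA xs as has x
  choose JBL hJBL using fun x => res_limit hmB t ht htlim htconv JB hJB xs (-as) hbs x
  have hJALmem : ∀ x, tlim⁻¹ • (x - JAL x) ∈ A (JAL x) := fun x =>
    res_limit_mem hmA hAmax t ht htlim htconv JA hJA (hJAL x)
  have hJBLmem : ∀ x, tlim⁻¹ • (x - JBL x) ∈ B (JBL x) := fun x =>
    res_limit_mem hmB hBmax t ht htlim htconv JB hJB (hJBL x)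
  have hJALrate : ∀ k x, ‖JA k x - JAL x‖ ≤ (|t k - tlim| / tlim) * ‖x - JAL x‖ := fun k x =>
    res_param hmA (ht k) htlim (hJA k x) (hJALmem x)
  have hJBLrate : ∀ k x, ‖JB k x - JBL x‖ ≤ (|t k - tlim| / tlim) * ‖x - JBL x‖ := fun k x =>
    res_param hmB (ht k) htlim (hJB k x) (hJBLmem x)
  have hJALnonexp : ∀ x y, ‖JAL x - JAL y‖ ≤ ‖x - y‖ := fun x y =>
    res_nonexp hmA htlim (hJALmem x) (hJALmem y)
  have hJBLnonexp : ∀ x y, ‖JBL x - JBL y‖ ≤ ‖x - y‖ := fun x y =>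
    res_nonexp hmB htlim (hJBLmem x) (hJBLmem y)
  have hJALfix : JAL (xs + tlim • as) = xs := by
    refine res_unique hmA htlim (hJALmem _) ?_
    have e : tlim⁻¹ • ((xs + tlim • as) - xs) = as := by
      rw [add_sub_cancel_left, smul_smul, inv_mul_cancel₀ (ne_of_gt htlim), one_smul]
    rw [e]; exact has
  have hJBLfix : JBL (xs - tlim • as) = xs := by
    refine res_unique hmB htlim (hJBLmem _) ?_
    have e : tlim⁻¹ • ((xs - tlim • as) - xs) = -as := by
      rw [sub_sub_cancel_left, smul_neg, smul_smul, inv_mul_cancel₀ (ne_of_gt htlim), one_smul]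
    rw [e]; exact hbs
  -- Fejér for the base triple
  obtain ⟨⟨ℓ0, hℓ0⟩, hE0⟩ :=
    fejer_limit hmA hmB t ht htlim htconv htsum JA JB hJA hJB w hw xs as has hbs
  -- boundedness of w
  obtain ⟨Mb, hMb⟩ := hℓ0.bddAbove_range
  set Cw : ℝ := Mb + ‖xs + tlim • as‖ with hCwdef
  have hCw : ∀ k, ‖w k‖ ≤ Cw := by
    intro k
    have h1 : ‖w k - (xs + tlim • as)‖ ≤ Mb := hMb (Set.mem_range_self k)
    calc ‖w k‖ = ‖(w k - (xs + tlim • as)) + (xs + tlim • as)‖ := by rw [sub_add_cancel]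
      _ ≤ ‖w k - (xs + tlim • as)‖ + ‖xs + tlim • as‖ := norm_add_le _ _
      _ ≤ Cw := by rw [hCwdef]; linarith
  obtain ⟨Tmax, hTmaxmem⟩ := htconv.bddAbove_range
  have hTmax : ∀ k, t k ≤ Tmax := fun k => hTmaxmem (Set.mem_range_self k)
  -- sequences
  set X : ℕ → H := fun k => JAL (w k) with hXdef
  set Y : ℕ → H := fun k => JBL (2 • X k - w k) with hYdef
  set uu : ℕ → H := fun k => JA k (w k) with huudef
  set vv : ℕ → H := fun k => JB k (2 • uu k - w k) with hvvdef
  set aa : ℕ → H := fun k => tlim⁻¹ • (w k - X k) with haadef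
  set bb : ℕ → H := fun k => tlim⁻¹ • ((2 • X k - w k) - Y k) with hbbdef
  have haA : ∀ k, aa k ∈ A (X k) := fun k => hJALmem (w k)
  have hbB : ∀ k, bb k ∈ B (Y k) := fun k => hJBLmem _
  have htdiff0 : Tendsto (fun k => |t k - tlim|) atTop (nhds 0) := by
    have h1 : Tendsto (fun k => t k - tlim) atTop (nhds 0) := by
      simpa using htconv.sub (tendsto_const_nhds (x := tlim))
    have h2 := h1.abs
    rwa [abs_zero] at h2
  -- bounds
  have hXb : ∀ k, ‖w k - X k‖ ≤ 2 * Cw + ‖xs + tlim • as‖ + ‖xs‖ := by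
    intro k
    have h1 : ‖X k - xs‖ ≤ ‖w k - (xs + tlim • as)‖ := by
      have := hJALnonexp (w k) (xs + tlim • as)
      rwa [hJALfix] at this
    have h2 : ‖w k - (xs + tlim • as)‖ ≤ ‖w k‖ + ‖xs + tlim • as‖ := norm_sub_le _ _
    have h3 : ‖w k - X k‖ ≤ ‖w k‖ + ‖X k‖ := norm_sub_le _ _
    have h4 : ‖X k‖ ≤ ‖X k - xs‖ + ‖xs‖ := by
      calc ‖X k‖ = ‖(X k - xs) + xs‖ := by rw [sub_add_cancel]
        _ ≤ ‖X k - xs‖ + ‖xs‖ := norm_add_le _ _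
    have h5 := hCw k
    linarith
  set C1 : ℝ := 2 * Cw + ‖xs + tlim • as‖ + ‖xs‖ with hC1def
  have hC1nn : 0 ≤ C1 := le_trans (norm_nonneg _) (hXb 0)
  have hXbdd : ∀ k, ‖X k‖ ≤ C1 + Cw := by
    intro k
    have h1 := hXb k
    have h2 : ‖X k‖ ≤ ‖w k - X k‖ + ‖w k‖ := by
      calc ‖X k‖ = ‖(w k) - (w k - X k)‖ := by rw [sub_sub_cancel]
        _ ≤ ‖w k‖ + ‖w k - X k‖ := norm_sub_le _ _
        _ = ‖w k - X k‖ + ‖w k‖ := by ring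
    have := hCw k
    linarith
  -- ‖uu k - X k‖ → 0
  have hXu0 : Tendsto (fun k => ‖uu k - X k‖) atTop (nhds 0) := by
    refine squeeze_zero (fun k => norm_nonneg _) (g := fun k => |t k - tlim| / tlim * C1) ?_ ?_
    · intro k
      refine (hJALrate k (w k)).trans ?_
      exact mul_le_mul_of_nonneg_left (hXb k) (by positivity)
    · have := (htdiff0.div_const tlim).mul_const C1
      simpa using this
  -- boundedness of uu and of the JBL-residual at 2•uu - w
  have huub : ∀ k, ‖uu k‖ ≤ Cw + ‖xs‖ + ‖xs + tlim • as‖ + Tmax * ‖as‖ + tlim * ‖as‖ := by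
    intro k
    have hanch : JA k (xs + t k • as) = xs := by
      refine res_unique hmA (ht k) (hJA k _) ?_
      have e : (t k)⁻¹ • ((xs + t k • as) - xs) = as := by
        rw [add_sub_cancel_left, smul_smul, inv_mul_cancel₀ (ne_of_gt (ht k)), one_smul]
      rw [e]; exact has
    have h1 : ‖uu k - xs‖ ≤ ‖w k - (xs + t k • as)‖ := by
      have := res_nonexp hmA (ht k) (hJA k (w k)) (hJA k (xs + t k • as))
      rwa [hanch] at this
    have h2 : ‖w k - (xs + t k • as)‖ ≤ ‖w k - (xs + tlim • as)‖ + ‖(tlim - t k) • as‖ := by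
      have e : w k - (xs + t k • as) = (w k - (xs + tlim • as)) + (tlim - t k) • as := by
        rw [sub_smul]; abel
      rw [e]; exact norm_add_le _ _
    have h3 : ‖(tlim - t k) • as‖ ≤ (Tmax + tlim) * ‖as‖ := by
      rw [norm_smul, Real.norm_eq_abs]
      refine mul_le_mul_of_nonneg_right ?_ (norm_nonneg _)
      refine (abs_sub _ _).trans ?_
      rw [abs_of_pos htlim, abs_of_pos (ht k)]
      have := hTmax k
      linarith
    have h4 : ‖w k - (xs + tlim • as)‖ ≤ ‖w k‖ + ‖xs + tlim • as‖ := norm_sub_le _ _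
    have h5 : ‖uu k‖ ≤ ‖uu k - xs‖ + ‖xs‖ := by
      calc ‖uu k‖ = ‖(uu k - xs) + xs‖ := by rw [sub_add_cancel]
        _ ≤ ‖uu k - xs‖ + ‖xs‖ := norm_add_le _ _
    have := hCw k
    nlinarith [norm_nonneg as]
  set Cu : ℝ := Cw + ‖xs‖ + ‖xs + tlim • as‖ + Tmax * ‖as‖ + tlim * ‖as‖ with hCudef
  have h2n : ∀ y : H, ‖(2:ℕ) • y‖ ≤ 2 * ‖y‖ := by
    intro y
    rw [two_smul]
    calc ‖y + y‖ ≤ ‖y‖ + ‖y‖ := norm_add_le _ _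
      _ = 2 * ‖y‖ := by ring
  set Cq : ℝ := 2 * Cu + Cw with hCqdef
  have hqb : ∀ k, ‖2 • uu k - w k‖ ≤ Cq := by
    intro k
    have h1 : ‖2 • uu k - w k‖ ≤ ‖(2:ℕ) • uu k‖ + ‖w k‖ := norm_sub_le _ _
    have h2 := h2n (uu k)
    have h3 := huub k
    have h4 := hCw k
    rw [hCqdef, hCudef]
    have : ‖uu k‖ ≤ Cu := by rw [hCudef]; exact h3
    rw [hCudef] at this
    linarith
  set C2 : ℝ := 2 * Cq + ‖xs - tlim • as‖ + ‖xs‖ with hC2def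
  have hresid : ∀ k, ‖(2 • uu k - w k) - JBL (2 • uu k - w k)‖ ≤ C2 := by
    intro k
    set q := 2 • uu k - w k
    have h1 : ‖JBL q - xs‖ ≤ ‖q - (xs - tlim • as)‖ := by
      have := hJBLnonexp q (xs - tlim • as)
      rwa [hJBLfix] at this
    have h2 : ‖q - (xs - tlim • as)‖ ≤ ‖q‖ + ‖xs - tlim • as‖ := norm_sub_le _ _
    have h3 : ‖q - JBL q‖ ≤ ‖q‖ + ‖JBL q‖ := norm_sub_le _ _
    have h4 : ‖JBL q‖ ≤ ‖JBL q - xs‖ + ‖xs‖ := by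
      calc ‖JBL q‖ = ‖(JBL q - xs) + xs‖ := by rw [sub_add_cancel]
        _ ≤ ‖JBL q - xs‖ + ‖xs‖ := norm_add_le _ _
    have h5 := hqb k
    rw [hC2def]
    linarith
  have hC2nn : 0 ≤ C2 := le_trans (norm_nonneg _) (hresid 0)
  have hvY0 : Tendsto (fun k => ‖vv k - Y k‖) atTop (nhds 0) := by
    have hbnd : ∀ k, ‖vv k - Y k‖ ≤ |t k - tlim| / tlim * C2 + 2 * ‖uu k - X k‖ := by
      intro k
      have h1 : vv k - Y k = (JB k (2 • uu k - w k) - JBL (2 • uu k - w k))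
          + (JBL (2 • uu k - w k) - JBL (2 • X k - w k)) := by
        rw [hvvdef, hYdef]; abel
      rw [h1]
      refine (norm_add_le _ _).trans ?_
      have h2 : ‖JB k (2 • uu k - w k) - JBL (2 • uu k - w k)‖ ≤ |t k - tlim| / tlim * C2 := by
        refine (hJBLrate k _).trans ?_
        exact mul_le_mul_of_nonneg_left (hresid k) (by positivity)
      have h3 : ‖JBL (2 • uu k - w k) - JBL (2 • X k - w k)‖ ≤ 2 * ‖uu k - X k‖ := by
        refine (hJBLnonexp _ _).trans ?_
        have e : (2 • uu k - w k) - (2 • X k - w k) = (2:ℕ) • (uu k - X k) := by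
          simp only [two_smul]; abel
        rw [e]
        exact h2n _
      linarith
    refine squeeze_zero (fun k => norm_nonneg _) hbnd ?_
    have h1 := (htdiff0.div_const tlim).mul_const C2
    have h2 := hXu0.const_mul 2
    have := h1.add h2
    simpa using this
  -- residual of the limit operator tends to zero
  have hδ0 : Tendsto (fun k => ‖Y k - X k‖) atTop (nhds 0) := by
    have hbnd : ∀ k, ‖Y k - X k‖ ≤ ‖vv k - Y k‖ + ‖w (k+1) - w k‖ + ‖uu k - X k‖ := by
      intro k
      have e : Y k - X k = -(vv k - Y k) + (vv k - uu k) + (uu k - X k) := by abel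
      have e2 : vv k - uu k = w (k+1) - w k := by
        rw [hw k, hvvdef, huudef]
        abel
      rw [e, e2]
      refine (norm_add_le _ _).trans (add_le_add_left ?_ _)
      refine (norm_add_le _ _).trans ?_
      rw [norm_neg]
    refine squeeze_zero (fun k => norm_nonneg _) hbnd ?_
    have := (hvY0.add hE0).add hXu0
    simpa using this
  -- the pairing identity and its limit
  have hpair : ∀ k, ⟪X k, aa k⟫_ℝ + ⟪Y k, bb k⟫_ℝ
      = tlim⁻¹ * (⟪X k - Y k, w k⟫_ℝ - ‖X k - Y k‖^2) := by
    intro k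
    simp only [haadef, hbbdef]
    rw [real_inner_smul_right, real_inner_smul_right, ← real_inner_self_eq_norm_sq]
    simp only [inner_sub_left, inner_sub_right, two_smul, inner_add_right]
    linear_combination (-tlim⁻¹) * real_inner_comm (Y k) (X k)
  have hP0 : Tendsto (fun k => ⟪X k, aa k⟫_ℝ + ⟪Y k, bb k⟫_ℝ) atTop (nhds 0) := by
    refine squeeze_zero_norm (a := fun k => tlim⁻¹ * (‖Y k - X k‖ * Cw + ‖Y k - X k‖^2)) ?_ ?_
    · intro k
      rw [hpair k, Real.norm_eq_abs, abs_mul, abs_of_pos (inv_pos.mpr htlim)]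
      refine mul_le_mul_of_nonneg_left ?_ (by positivity)
      refine (abs_sub _ _).trans ?_
      have h1 := abs_real_inner_le_norm (X k - Y k) (w k)
      have h2 : ‖X k - Y k‖ = ‖Y k - X k‖ := norm_sub_rev _ _
      have h3 : ‖X k - Y k‖ * ‖w k‖ ≤ ‖Y k - X k‖ * Cw := by
        rw [h2]
        exact mul_le_mul_of_nonneg_left (hCw k) (norm_nonneg _)
      have h4 : |‖X k - Y k‖^2| = ‖Y k - X k‖^2 := by
        rw [abs_of_nonneg (by positivity), h2]
      have h5 : |⟪X k - Y k, w k⟫_ℝ| ≤ ‖Y k - X k‖ * Cw := le_trans h1 h3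
      rw [h4]
      linarith
    · have h1 := hδ0.mul_const Cw
      have h2 := hδ0.pow 2
      have := (h1.add h2).const_mul tlim⁻¹
      simpa using this
  -- identification of weak cluster points
  have key : ∀ (σ : ℕ → ℕ), Tendsto σ atTop atTop → ∀ w1 x1 : H,
      (∀ z, Tendsto (fun k => ⟪w (σ k), z⟫_ℝ) atTop (nhds ⟪w1, z⟫_ℝ)) →
      (∀ z, Tendsto (fun k => ⟪X (σ k), z⟫_ℝ) atTop (nhds ⟪x1, z⟫_ℝ)) →
      x1 = JAL w1 ∧ tlim⁻¹ • (w1 - x1) ∈ A x1 ∧ -(tlim⁻¹ • (w1 - x1)) ∈ B x1 := by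
    intro σ hσ w1 x1 hwc hxc
    set a1 : H := tlim⁻¹ • (w1 - x1) with ha1def
    have hδσ : Tendsto (fun k => ‖Y (σ k) - X (σ k)‖) atTop (nhds 0) := hδ0.comp hσ
    have hcomb : ∀ p q p' q' : H, q ∈ A p → q' ∈ B p' →
        0 ≤ ⟪x1 - p, a1 - q⟫_ℝ + ⟪x1 - p', -a1 - q'⟫_ℝ := by
      intro p q p' q' hq hq'
      have hFk : ∀ k, 0 ≤ ⟪X k - p, aa k - q⟫_ℝ + ⟪Y k - p', bb k - q'⟫_ℝ := fun k =>
        add_nonneg (hmA _ _ _ _ (haA k) hq) (hmB _ _ _ _ (hbB k) hq')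
      have hexp : ∀ k, ⟪X k - p, aa k - q⟫_ℝ + ⟪Y k - p', bb k - q'⟫_ℝ
          = (⟪X k, aa k⟫_ℝ + ⟪Y k, bb k⟫_ℝ)
            - ⟪X k, q⟫_ℝ - ⟪p, aa k⟫_ℝ + ⟪p, q⟫_ℝ
            - ⟪Y k, q'⟫_ℝ - ⟪p', bb k⟫_ℝ + ⟪p', q'⟫_ℝ := by
        intro k
        simp only [inner_sub_left, inner_sub_right]
        ring
      -- limits of the individual pieces along σ
      have hA1 : Tendsto (fun k => ⟪X (σ k), q⟫_ℝ) atTop (nhds ⟪x1, q⟫_ℝ) := hxc q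
      have hA2 : Tendsto (fun k => ⟪p, aa (σ k)⟫_ℝ) atTop (nhds ⟪p, a1⟫_ℝ) := by
        have e : ∀ k, ⟪p, aa k⟫_ℝ = tlim⁻¹ * (⟪w k, p⟫_ℝ - ⟪X k, p⟫_ℝ) := by
          intro k
          simp only [haadef]
          rw [real_inner_smul_right, inner_sub_right,
            real_inner_comm p (w k), real_inner_comm p (X k)]
        have e' : ⟪p, a1⟫_ℝ = tlim⁻¹ * (⟪w1, p⟫_ℝ - ⟪x1, p⟫_ℝ) := by
          rw [ha1def, real_inner_smul_right, inner_sub_right,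
            real_inner_comm p w1, real_inner_comm p x1]
        simp only [e, e']
        exact ((hwc p).sub (hxc p)).const_mul _
      have hYz : ∀ z : H, Tendsto (fun k => ⟪Y (σ k), z⟫_ℝ) atTop (nhds ⟪x1, z⟫_ℝ) := by
        intro z
        have h1 : ∀ k, ⟪Y k, z⟫_ℝ = ⟪X k, z⟫_ℝ + ⟪Y k - X k, z⟫_ℝ := by
          intro k
          rw [inner_sub_left]
          ring
        have h2 : Tendsto (fun k => ⟪Y (σ k) - X (σ k), z⟫_ℝ) atTop (nhds 0) := by
          refine squeeze_zero_norm (a := fun k => ‖Y (σ k) - X (σ k)‖ * ‖z‖) ?_ ?_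
          · intro k
            exact abs_real_inner_le_norm _ _
          · simpa using hδσ.mul_const ‖z‖
        have := (hxc z).add h2
        rw [add_zero] at this
        simpa only [h1] using this
      have hA3 : Tendsto (fun k => ⟪Y (σ k), q'⟫_ℝ) atTop (nhds ⟪x1, q'⟫_ℝ) := hYz q'
      have hA4 : Tendsto (fun k => ⟪p', bb (σ k)⟫_ℝ) atTop (nhds ⟪p', -a1⟫_ℝ) := by
        have e : ∀ k, ⟪p', bb k⟫_ℝ
            = tlim⁻¹ * (⟪X k, p'⟫_ℝ - ⟪w k, p'⟫_ℝ) - tlim⁻¹ * ⟪Y k - X k, p'⟫_ℝ := by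
          intro k
          simp only [hbbdef]
          rw [real_inner_smul_right]
          have e2 : ⟪p', 2 • X k - w k - Y k⟫_ℝ
              = (⟪X k, p'⟫_ℝ - ⟪w k, p'⟫_ℝ) - ⟪Y k - X k, p'⟫_ℝ := by
            simp only [two_smul, inner_sub_right, inner_add_right, inner_sub_left]
            rw [real_inner_comm p' (X k), real_inner_comm p' (w k), real_inner_comm p' (Y k)]
            ring
          rw [e2]
          ring
        have e' : ⟪p', -a1⟫_ℝ = tlim⁻¹ * (⟪x1, p'⟫_ℝ - ⟪w1, p'⟫_ℝ) - tlim⁻¹ * 0 := by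
          rw [ha1def, inner_neg_right, real_inner_smul_right, inner_sub_right,
            real_inner_comm p' w1, real_inner_comm p' x1]
          ring
        simp only [e, e']
        refine Filter.Tendsto.sub ?_ ?_
        · exact ((hxc p').sub (hwc p')).const_mul _
        · have h2 : Tendsto (fun k => ⟪Y (σ k) - X (σ k), p'⟫_ℝ) atTop (nhds 0) := by
            refine squeeze_zero_norm (a := fun k => ‖Y (σ k) - X (σ k)‖ * ‖p'‖) ?_ ?_
            · intro k
              exact abs_real_inner_le_norm _ _
            · simpa using hδσ.mul_const ‖p'‖
          simpa using h2.const_mul tlim⁻¹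
      have hA0 : Tendsto (fun k => ⟪X (σ k), aa (σ k)⟫_ℝ + ⟪Y (σ k), bb (σ k)⟫_ℝ)
          atTop (nhds 0) := hP0.comp hσ
      have htot : Tendsto (fun k => ⟪X (σ k) - p, aa (σ k) - q⟫_ℝ
          + ⟪Y (σ k) - p', bb (σ k) - q'⟫_ℝ) atTop
          (nhds (0 - ⟪x1, q⟫_ℝ - ⟪p, a1⟫_ℝ + ⟪p, q⟫_ℝ
            - ⟪x1, q'⟫_ℝ - ⟪p', -a1⟫_ℝ + ⟪p', q'⟫_ℝ)) := by
        simp only [hexp]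
        exact ((((((hA0.sub hA1).sub hA2).add tendsto_const_nhds).sub hA3).sub hA4).add
          tendsto_const_nhds)
      have hge := ge_of_tendsto htot (Filter.Eventually.of_forall (fun k => hFk (σ k)))
      have efin : 0 - ⟪x1, q⟫_ℝ - ⟪p, a1⟫_ℝ + ⟪p, q⟫_ℝ
            - ⟪x1, q'⟫_ℝ - ⟪p', -a1⟫_ℝ + ⟪p', q'⟫_ℝ
          = ⟪x1 - p, a1 - q⟫_ℝ + ⟪x1 - p', -a1 - q'⟫_ℝ := by
        simp only [inner_sub_left, inner_sub_right, inner_neg_right, inner_neg_left]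
        ring
      rw [efin] at hge
      exact hge
    -- maximality arguments
    set xb : H := JAL w1 with hxbdef
    set ab : H := tlim⁻¹ • (w1 - xb) with habdef
    have habA : ab ∈ A xb := hJALmem w1
    have hBmem : -a1 ∈ B x1 := by
      refine hBmax _ _ (fun p' q' hq' => ?_)
      have h := hcomb xb ab p' q' habA hq'
      have e : ⟪x1 - xb, a1 - ab⟫_ℝ = -(tlim⁻¹ * ‖x1 - xb‖^2) := by
        have e2 : a1 - ab = tlim⁻¹ • (xb - x1) := by
          rw [ha1def, habdef, ← smul_sub]
          congr 1
          abel
        rw [e2, real_inner_smul_right]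
        have e3 : xb - x1 = -(x1 - xb) := by abel
        rw [e3, inner_neg_right, real_inner_self_eq_norm_sq]
        ring
      rw [e] at h
      have hnn : 0 ≤ tlim⁻¹ * ‖x1 - xb‖^2 := by positivity
      linarith
    have hAmem : a1 ∈ A x1 := by
      refine hAmax _ _ (fun p q hq => ?_)
      have h := hcomb p q x1 (-a1) hq hBmem
      have e : ⟪x1 - x1, -a1 - -a1⟫_ℝ = 0 := by
        rw [sub_self, inner_zero_left]
      rw [e, add_zero] at h
      exact h
    have hxeq : x1 = xb := by
      refine res_unique hmA htlim ?_ habA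
      exact hAmem
    exact ⟨hxeq, hAmem, hBmem⟩
  -- base extraction
  obtain ⟨pw, φ1, hφ1, hwc1⟩ := weak_compact w Cw hCw
  obtain ⟨px, φ2, hφ2, hxc1⟩ := weak_compact (fun k => X (φ1 k)) (C1 + Cw) (fun k => hXbdd _)
  have hσ0 : Tendsto (fun n => φ1 (φ2 n)) atTop atTop :=
    hφ1.tendsto_atTop.comp hφ2.tendsto_atTop
  have hwc0 : ∀ z, Tendsto (fun k => ⟪w (φ1 (φ2 k)), z⟫_ℝ) atTop (nhds ⟪pw, z⟫_ℝ) :=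
    fun z => (hwc1 z).comp hφ2.tendsto_atTop
  obtain ⟨hxeq0, hA0', hB0'⟩ := key _ hσ0 pw px hwc0 hxc1
  have hℓb' : ∃ ℓb, Tendsto (fun k => ‖w k - pw‖) atTop (nhds ℓb) := by
    obtain ⟨⟨ℓb, hℓb⟩, -⟩ := fejer_limit hmA hmB t ht htlim htconv htsum JA JB hJA hJB w hw
      px (tlim⁻¹ • (pw - px)) hA0' hB0'
    refine ⟨ℓb, ?_⟩
    have hpt : px + tlim • (tlim⁻¹ • (pw - px)) = pw := by
      rw [smul_inv_smul₀ (ne_of_gt htlim), add_sub_cancel]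
    rwa [hpt] at hℓb
  obtain ⟨ℓb, hℓb⟩ := hℓb'
  -- uniqueness of weak cluster points
  have huniq : ∀ (σ : ℕ → ℕ), Tendsto σ atTop atTop → ∀ w1 x1 : H,
      (∀ z, Tendsto (fun k => ⟪w (σ k), z⟫_ℝ) atTop (nhds ⟪w1, z⟫_ℝ)) →
      (∀ z, Tendsto (fun k => ⟪X (σ k), z⟫_ℝ) atTop (nhds ⟪x1, z⟫_ℝ)) →
      w1 = pw ∧ x1 = px := by
    intro σ hσ w1 x1 hwc hxc
    obtain ⟨hxeq1, hA1', hB1'⟩ := key σ hσ w1 x1 hwc hxc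
    have hℓ1' : ∃ ℓ1, Tendsto (fun k => ‖w k - w1‖) atTop (nhds ℓ1) := by
      obtain ⟨⟨ℓ1, hℓ1⟩, -⟩ := fejer_limit hmA hmB t ht htlim htconv htsum JA JB hJA hJB w hw
        x1 (tlim⁻¹ • (w1 - x1)) hA1' hB1'
      refine ⟨ℓ1, ?_⟩
      have hpt : x1 + tlim • (tlim⁻¹ • (w1 - x1)) = w1 := by
        rw [smul_inv_smul₀ (ne_of_gt htlim), add_sub_cancel]
      rwa [hpt] at hℓ1
    obtain ⟨ℓ1, hℓ1⟩ := hℓ1'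
    have hip : Tendsto (fun k => ⟪w k, w1 - pw⟫_ℝ) atTop
        (nhds ((‖w1‖^2 - ‖pw‖^2 - (ℓ1^2 - ℓb^2))/2)) := by
      have hg : Tendsto (fun k => ‖w k - w1‖^2 - ‖w k - pw‖^2) atTop
          (nhds (ℓ1^2 - ℓb^2)) := (hℓ1.pow 2).sub (hℓb.pow 2)
      have he : ∀ k, ⟪w k, w1 - pw⟫_ℝ
          = (‖w1‖^2 - ‖pw‖^2 - (‖w k - w1‖^2 - ‖w k - pw‖^2))/2 := by
        intro k
        rw [norm_sub_sq_real, norm_sub_sq_real, inner_sub_right]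
        ring
      simp only [he]
      exact ((tendsto_const_nhds (x := ‖w1‖^2 - ‖pw‖^2)).sub hg).div_const 2
    have hm1 : ⟪w1, w1 - pw⟫_ℝ = (‖w1‖^2 - ‖pw‖^2 - (ℓ1^2 - ℓb^2))/2 :=
      tendsto_nhds_unique (hwc (w1 - pw)) (hip.comp hσ)
    have hm2 : ⟪pw, w1 - pw⟫_ℝ = (‖w1‖^2 - ‖pw‖^2 - (ℓ1^2 - ℓb^2))/2 :=
      tendsto_nhds_unique (hwc0 (w1 - pw)) (hip.comp hσ0)
    have hz : ‖w1 - pw‖^2 = 0 := by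
      rw [← real_inner_self_eq_norm_sq, inner_sub_left]
      rw [hm1, hm2]
      ring
    have hweq : w1 = pw := by
      have := (pow_eq_zero_iff (n := 2) (by norm_num)).mp hz
      rwa [norm_eq_zero, sub_eq_zero] at this
    refine ⟨hweq, ?_⟩
    rw [hxeq1, hweq, ← hxeq0]
  -- conclusion
  refine ⟨px, ⟨tlim⁻¹ • (pw - px), -(tlim⁻¹ • (pw - px)), hA0', hB0', add_neg_cancel _⟩, ?_⟩
  intro z
  refine Filter.tendsto_of_subseq_tendsto (fun ns hns => ?_)
  obtain ⟨p1, ρ1, hρ1, hwc'⟩ := weak_compact (fun k => w (ns k)) Cw (fun k => hCw _)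
  obtain ⟨p2, ρ2, hρ2, hxc'⟩ := weak_compact (fun k => X (ns (ρ1 k))) (C1 + Cw)
    (fun k => hXbdd _)
  have hσ : Tendsto (fun n => ns (ρ1 (ρ2 n))) atTop atTop :=
    hns.comp (hρ1.tendsto_atTop.comp hρ2.tendsto_atTop)
  have hwcσ : ∀ z', Tendsto (fun k => ⟪w (ns (ρ1 (ρ2 k))), z'⟫_ℝ) atTop (nhds ⟪p1, z'⟫_ℝ) :=
    fun z' => (hwc' z').comp hρ2.tendsto_atTop
  obtain ⟨hw1eq, hx1eq⟩ := huniq _ hσ p1 p2 hwcσ hxc'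
  refine ⟨fun n => ρ1 (ρ2 n), ?_⟩
  have h1 : Tendsto (fun n => ⟪X (ns (ρ1 (ρ2 n))), z⟫_ℝ) atTop (nhds ⟪px, z⟫_ℝ) := by
    have := hxc' z
    rwa [hx1eq] at this
  have h2 : Tendsto (fun n => ⟪uu (ns (ρ1 (ρ2 n))) - X (ns (ρ1 (ρ2 n))), z⟫_ℝ)
      atTop (nhds 0) := by
    refine squeeze_zero_norm
      (a := fun n => ‖uu (ns (ρ1 (ρ2 n))) - X (ns (ρ1 (ρ2 n)))‖ * ‖z‖) ?_ ?_
    · intro n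
      exact abs_real_inner_le_norm _ _
    · simpa using (hXu0.comp hσ).mul_const ‖z‖
  have he : ∀ n, ⟪uu (ns (ρ1 (ρ2 n))), z⟫_ℝ
      = ⟪X (ns (ρ1 (ρ2 n))), z⟫_ℝ + ⟪uu (ns (ρ1 (ρ2 n))) - X (ns (ρ1 (ρ2 n))), z⟫_ℝ := by
    intro n
    rw [inner_sub_left]
    ring
  have := h1.add h2
  rw [add_zero] at this
  simpa only [he] using this
end

section
/- Let A, B, Δ be real N×N matrices with A and B monotone (⟨Tx,x⟩ ≥ 0 for all x) and Δ symmetric positive definite. Then H_Δ := (I + ΔA)⁻¹(ΔA + (I + ΔB)⁻¹(I − ΔA)) satisfies H_Δ = (I + ΔA + ΔB + ΔBΔA)⁻¹(I + ΔBΔA), and every eigenvalue λ ∈ ℂ of H_Δ with λ ≠ 1 and eigenvector z satisfies |λ − 1/2| ≤ √(1/4 − c/(1+2c)) ≤ 1/2, where c := Re⟨Az, z⟩ / (‖z‖²_{Δ⁻¹} + ‖Az‖²_Δ) ≥ 0. -/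
open Matrix Complex

section Stmt14Aux

variable {N : ℕ}

lemma stmt14_conj_dot (v w : Fin N → ℂ) : star (star v ⬝ᵥ w) = star w ⬝ᵥ v := by
  simp [dotProduct, star_sum, mul_comm]

lemma stmt14_re_dot_eq (M : Matrix (Fin N) (Fin N) ℝ) (z : Fin N → ℂ) :
    ((star z) ⬝ᵥ (M.map Complex.ofReal).mulVec z).re
      = M.mulVec (fun i => (z i).re) ⬝ᵥ (fun i => (z i).re)
        + M.mulVec (fun i => (z i).im) ⬝ᵥ (fun i => (z i).im) := by
  simp only [dotProduct, mulVec, Matrix.map_apply, Pi.star_apply, Finset.mul_sum,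
    Finset.sum_mul, Complex.re_sum]
  rw [← Finset.sum_add_distrib]
  refine Finset.sum_congr rfl fun i _ => ?_
  rw [← Finset.sum_add_distrib]
  refine Finset.sum_congr rfl fun j _ => ?_
  simp only [Complex.mul_re, Complex.mul_im, Complex.ofReal_re, Complex.ofReal_im,
    RCLike.star_def, Complex.conj_re, Complex.conj_im]
  ring

lemma stmt14_re_dot_nonneg (M : Matrix (Fin N) (Fin N) ℝ)
    (hM : ∀ x : Fin N → ℝ, 0 ≤ M.mulVec x ⬝ᵥ x) (z : Fin N → ℂ) :
    0 ≤ ((star z) ⬝ᵥ (M.map Complex.ofReal).mulVec z).re := by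
  rw [stmt14_re_dot_eq]; exact add_nonneg (hM _) (hM _)

lemma stmt14_re_dot_pos {M : Matrix (Fin N) (Fin N) ℝ} (hM : M.PosDef) {z : Fin N → ℂ}
    (hz : z ≠ 0) : 0 < ((star z) ⬝ᵥ (M.map Complex.ofReal).mulVec z).re := by
  rw [stmt14_re_dot_eq]
  have hsemi : ∀ x : Fin N → ℝ, 0 ≤ M.mulVec x ⬝ᵥ x := fun x => by
    have := hM.posSemidef.dotProduct_mulVec_nonneg x
    rwa [star_trivial, dotProduct_comm] at this
  have hpos : ∀ x : Fin N → ℝ, x ≠ 0 → 0 < M.mulVec x ⬝ᵥ x := fun x hx => by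
    have := hM.dotProduct_mulVec_pos hx
    rwa [star_trivial, dotProduct_comm] at this
  by_cases hre : (fun i => (z i).re) = (0 : Fin N → ℝ)
  · have him : (fun i => (z i).im) ≠ (0 : Fin N → ℝ) := by
      intro h
      apply hz
      funext i
      have h1 := congrFun hre i
      have h2 := congrFun h i
      simp only [Pi.zero_apply] at h1 h2
      exact Complex.ext h1 h2
    have h3 := hpos _ him
    have h4 := hsemi (fun i => (z i).re)
    linarith
  · have h3 := hpos _ hre
    have h4 := hsemi (fun i => (z i).im)
    linarith

lemma stmt14_map_mul (M P : Matrix (Fin N) (Fin N) ℝ) :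
    ((M * P).map Complex.ofReal) = M.map Complex.ofReal * P.map Complex.ofReal := by
  ext i j
  simp [Matrix.mul_apply, Matrix.map_apply]

lemma stmt14_map_add (M P : Matrix (Fin N) (Fin N) ℝ) :
    ((M + P).map Complex.ofReal) = M.map Complex.ofReal + P.map Complex.ofReal := by
  ext i j; simp

lemma stmt14_map_one :
    ((1 : Matrix (Fin N) (Fin N) ℝ).map Complex.ofReal) = 1 :=
  Matrix.map_one _ Complex.ofReal_zero Complex.ofReal_one

lemma stmt14_det_ne (Δ T : Matrix (Fin N) (Fin N) ℝ) (hΔ : Δ.PosDef)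
    (hT : ∀ x : Fin N → ℝ, 0 ≤ T.mulVec x ⬝ᵥ x) : (1 + Δ * T).det ≠ 0 := by
  intro h
  obtain ⟨v, hv, hveq⟩ := (Matrix.exists_mulVec_eq_zero_iff).2 h
  have h1 : v + Δ *ᵥ (T *ᵥ v) = 0 := by
    simpa [Matrix.add_mulVec, Matrix.one_mulVec, ← Matrix.mulVec_mulVec] using hveq
  have hdet : IsUnit Δ.det := hΔ.det_pos.ne'.isUnit
  have hcan : Δ⁻¹ * (Δ * T) = T := by
    rw [← mul_assoc, Matrix.nonsing_inv_mul Δ hdet, one_mul]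
  have h2 : Δ⁻¹ *ᵥ v + T *ᵥ v = 0 := by
    have h3 := congrArg (fun w => Δ⁻¹ *ᵥ w) h1
    simpa [Matrix.mulVec_add, Matrix.mulVec_mulVec, hcan] using h3
  have h3 : v ⬝ᵥ (Δ⁻¹ *ᵥ v) + v ⬝ᵥ (T *ᵥ v) = 0 := by
    have h4 := congrArg (fun w => v ⬝ᵥ w) h2
    simpa [dotProduct_add] using h4
  have hp : 0 < v ⬝ᵥ (Δ⁻¹ *ᵥ v) := by
    have := hΔ.inv.dotProduct_mulVec_pos hv
    rwa [star_trivial] at this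
  have hq : 0 ≤ v ⬝ᵥ (T *ᵥ v) := by rw [dotProduct_comm]; exact hT v
  linarith

end Stmt14Aux

/-- Eigenvalue localization for the linear Douglas–Rachford operator H_Δ. -/
theorem stmt14 {N : ℕ} (A B Δ : Matrix (Fin N) (Fin N) ℝ)
    (hA : ∀ x : Fin N → ℝ, 0 ≤ A.mulVec x ⬝ᵥ x)
    (hB : ∀ x : Fin N → ℝ, 0 ≤ B.mulVec x ⬝ᵥ x)
    (hΔ : Δ.PosDef) :
    ((1 + Δ * A)⁻¹ * (Δ * A + (1 + Δ * B)⁻¹ * (1 - Δ * A)) =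
      (1 + Δ * A + Δ * B + Δ * B * (Δ * A))⁻¹ * (1 + Δ * B * (Δ * A))) ∧
    (∀ (lam : ℂ) (z : Fin N → ℂ), z ≠ 0 → lam ≠ 1 →
      (((1 + Δ * A)⁻¹ * (Δ * A + (1 + Δ * B)⁻¹ * (1 - Δ * A))).map
        Complex.ofReal).mulVec z = lam • z →
      -- c := Re⟨Az, z⟩ / (‖z‖²_{Δ⁻¹} + ‖Az‖²_Δ)
      (let Az := (A.map Complex.ofReal).mulVec z
       let c := ((star z) ⬝ᵥ Az).re /
        (((star z) ⬝ᵥ ((Δ⁻¹.map Complex.ofReal).mulVec z)).re +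
         ((star Az) ⬝ᵥ ((Δ.map Complex.ofReal).mulVec Az)).re)
       0 ≤ c ∧
       ‖lam - 1 / 2‖ ≤ Real.sqrt (1 / 4 - c / (1 + 2 * c)) ∧
       Real.sqrt (1 / 4 - c / (1 + 2 * c)) ≤ 1 / 2)) := by
  have hdA : (1 + Δ * A).det ≠ 0 := stmt14_det_ne Δ A hΔ hA
  have hdB : (1 + Δ * B).det ≠ 0 := stmt14_det_ne Δ B hΔ hB
  have hfact : 1 + Δ * A + Δ * B + Δ * B * (Δ * A) = (1 + Δ * B) * (1 + Δ * A) := by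
    noncomm_ring
  have hmid : Δ * A + (1 + Δ * B)⁻¹ * (1 - Δ * A)
      = (1 + Δ * B)⁻¹ * (1 + Δ * B * (Δ * A)) := by
    have hc : (1 + Δ * B)⁻¹ * (1 + Δ * B) = 1 :=
      Matrix.nonsing_inv_mul _ hdB.isUnit
    calc Δ * A + (1 + Δ * B)⁻¹ * (1 - Δ * A)
        = (1 + Δ * B)⁻¹ * ((1 + Δ * B) * (Δ * A)) + (1 + Δ * B)⁻¹ * (1 - Δ * A) := by
          rw [← mul_assoc, hc, one_mul]
      _ = (1 + Δ * B)⁻¹ * ((1 + Δ * B) * (Δ * A) + (1 - Δ * A)) := by rw [mul_add]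
      _ = (1 + Δ * B)⁻¹ * (1 + Δ * B * (Δ * A)) := by congr 1; noncomm_ring
  have part1 : (1 + Δ * A)⁻¹ * (Δ * A + (1 + Δ * B)⁻¹ * (1 - Δ * A)) =
      (1 + Δ * A + Δ * B + Δ * B * (Δ * A))⁻¹ * (1 + Δ * B * (Δ * A)) := by
    rw [hmid, hfact, Matrix.mul_inv_rev]
    exact (mul_assoc _ _ _).symm
  refine ⟨part1, ?_⟩
  intro lam z hz hlam heig
  rw [part1] at heig
  have hΔdet : IsUnit Δ.det := hΔ.det_pos.ne'.isUnit
  have hdG : (1 + Δ * A + Δ * B + Δ * B * (Δ * A)).det ≠ 0 := by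
    rw [hfact, Matrix.det_mul]; exact mul_ne_zero hdB hdA
  have hGinv : (1 + Δ * A + Δ * B + Δ * B * (Δ * A)) *
      (1 + Δ * A + Δ * B + Δ * B * (Δ * A))⁻¹ = 1 :=
    Matrix.mul_nonsing_inv _ hdG.isUnit
  have hGM : (1 + Δ * A + Δ * B + Δ * B * (Δ * A)) *
      ((1 + Δ * A + Δ * B + Δ * B * (Δ * A))⁻¹ * (1 + Δ * B * (Δ * A)))
      = 1 + Δ * B * (Δ * A) := by
    rw [← mul_assoc, hGinv, one_mul]
  have heq : ((1 + Δ * B * (Δ * A)).map Complex.ofReal) *ᵥ z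
      = lam • (((1 + Δ * A + Δ * B + Δ * B * (Δ * A)).map Complex.ofReal) *ᵥ z) := by
    have h0 := congrArg
      (fun v => ((1 + Δ * A + Δ * B + Δ * B * (Δ * A)).map Complex.ofReal) *ᵥ v) heig
    simpa only [Matrix.mulVec_mulVec, ← stmt14_map_mul, hGM, Matrix.mulVec_smul] using h0
  set Ac := A.map Complex.ofReal with hAc
  set Bc := B.map Complex.ofReal with hBc
  set Δc := Δ.map Complex.ofReal with hΔc
  set Dc := Δ⁻¹.map Complex.ofReal with hDc
  set u := Ac *ᵥ z with hu
  set w := Δc *ᵥ u with hw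
  -- expand the eigen equation
  have heq' : z + Δc *ᵥ (Bc *ᵥ w) = lam • (z + w + Δc *ᵥ (Bc *ᵥ z) + Δc *ᵥ (Bc *ᵥ w)) := by
    simpa only [stmt14_map_add, stmt14_map_one, stmt14_map_mul, Matrix.add_mulVec,
      Matrix.one_mulVec, ← Matrix.mulVec_mulVec, ← hAc, ← hBc, ← hΔc, ← hu, ← hw] using heq
  set p := lam • z - (1 - lam) • w with hp
  have hBtp : Δc *ᵥ (Bc *ᵥ p) = (1 - lam) • z - lam • w := by
    have hlin : Δc *ᵥ (Bc *ᵥ p) = lam • (Δc *ᵥ (Bc *ᵥ z)) - (1 - lam) • (Δc *ᵥ (Bc *ᵥ w)) := by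
      rw [hp]
      simp only [Matrix.mulVec_sub, Matrix.mulVec_smul]
    rw [hlin]
    funext i
    have h := congrFun heq' i
    simp only [Pi.add_apply, Pi.smul_apply, Pi.sub_apply, smul_eq_mul] at h ⊢
    linear_combination -h
  have hDcΔc : Dc *ᵥ (Δc *ᵥ (Bc *ᵥ p)) = Bc *ᵥ p := by
    rw [Matrix.mulVec_mulVec, ← stmt14_map_mul, Matrix.nonsing_inv_mul Δ hΔdet,
      stmt14_map_one, Matrix.one_mulVec]
  have hDw : Dc *ᵥ w = u := by
    rw [hw, Matrix.mulVec_mulVec, ← stmt14_map_mul, Matrix.nonsing_inv_mul Δ hΔdet,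
      stmt14_map_one, Matrix.one_mulVec]
  have hBp : Bc *ᵥ p = (1 - lam) • (Dc *ᵥ z) - lam • u := by
    rw [← hDcΔc, hBtp, Matrix.mulVec_sub, Matrix.mulVec_smul, Matrix.mulVec_smul, hDw]
  -- scalar quantities
  set α := star z ⬝ᵥ (Dc *ᵥ z) with hα
  set s := star z ⬝ᵥ u with hs
  set δ := star u ⬝ᵥ (Δc *ᵥ u) with hδ
  have hsemiconj : Function.Semiconj Complex.ofReal star star := fun a => by
    simp [Complex.conj_ofReal]
  have hΔH : Δcᴴ = Δc := by
    rw [hΔc, ← Matrix.conjTranspose_map Complex.ofReal hsemiconj, hΔ.1]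
  have hDH : Dcᴴ = Dc := by
    rw [hDc, ← Matrix.conjTranspose_map Complex.ofReal hsemiconj, hΔ.inv.1]
  have e3 : star w ⬝ᵥ (Dc *ᵥ z) = star s := by
    rw [hw, Matrix.star_mulVec, hΔH, ← Matrix.dotProduct_mulVec, Matrix.mulVec_mulVec,
      ← stmt14_map_mul, Matrix.mul_nonsing_inv Δ hΔdet, stmt14_map_one, Matrix.one_mulVec,
      hs]
    exact (stmt14_conj_dot z u).symm
  have e4 : star w ⬝ᵥ u = δ := by
    rw [hw, Matrix.star_mulVec, hΔH, ← Matrix.dotProduct_mulVec, hδ]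
  have hαc : (starRingEnd ℂ) α = α := by
    have h1 : star α = star (Dc *ᵥ z) ⬝ᵥ z := stmt14_conj_dot _ _
    have h2 : star (Dc *ᵥ z) ⬝ᵥ z = star z ⬝ᵥ (Dc *ᵥ z) := by
      rw [Matrix.star_mulVec, hDH, ← Matrix.dotProduct_mulVec]
    exact h1.trans h2
  have hδc : (starRingEnd ℂ) δ = δ := by
    have h1 : star δ = star (Δc *ᵥ u) ⬝ᵥ u := stmt14_conj_dot _ _
    have h2 : star (Δc *ᵥ u) ⬝ᵥ u = star u ⬝ᵥ (Δc *ᵥ u) := by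
      rw [Matrix.star_mulVec, hΔH, ← Matrix.dotProduct_mulVec]
    exact h1.trans h2
  have him_α : α.im = 0 := Complex.conj_eq_iff_im.mp hαc
  have him_δ : δ.im = 0 := Complex.conj_eq_iff_im.mp hδc
  -- the monotonicity inequality, expanded
  have hmono : 0 ≤ ((star p) ⬝ᵥ (Bc *ᵥ p)).re := stmt14_re_dot_nonneg B hB p
  have hsp : star p = star lam • star z - star (1 - lam) • star w := by
    rw [hp, star_sub, star_smul, star_smul]
  have hexp : (star p) ⬝ᵥ (Bc *ᵥ p)
      = star lam * (1 - lam) * α - star lam * lam * s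
        - star (1 - lam) * (1 - lam) * star s + star (1 - lam) * lam * δ := by
    rw [hBp, hsp]
    simp only [sub_dotProduct, dotProduct_sub, smul_dotProduct,
      dotProduct_smul, smul_eq_mul, e3, e4, ← hα, ← hs]
    ring
  rw [hexp] at hmono
  have hre : (star lam * (1 - lam) * α - star lam * lam * s
        - star (1 - lam) * (1 - lam) * star s + star (1 - lam) * lam * δ).re
      = (lam.re - (lam.re^2 + lam.im^2)) * (α.re + δ.re)
        - ((lam.re^2 + lam.im^2) + ((1 - lam.re)^2 + lam.im^2)) * s.re := by
    simp only [RCLike.star_def, Complex.add_re, Complex.sub_re, Complex.mul_re, Complex.mul_im,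
      Complex.conj_re, Complex.conj_im, Complex.one_re, Complex.one_im, Complex.sub_im,
      him_α, him_δ]
    ring
  rw [hre] at hmono
  -- basic positivity facts
  have ha : 0 < α.re := stmt14_re_dot_pos hΔ.inv hz
  have hΔsemi : ∀ x : Fin N → ℝ, 0 ≤ Δ.mulVec x ⬝ᵥ x := fun x => by
    have := hΔ.posSemidef.dotProduct_mulVec_nonneg x
    rwa [star_trivial, dotProduct_comm] at this
  have hd : 0 ≤ δ.re := stmt14_re_dot_nonneg Δ hΔsemi u
  have hr : 0 ≤ s.re := stmt14_re_dot_nonneg A hA z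
  have hD : 0 < α.re + δ.re := by linarith
  have hDr : 0 < α.re + δ.re + 2 * s.re := by linarith
  have hc0 : (0:ℝ) ≤ s.re / (α.re + δ.re) := div_nonneg hr hD.le
  have hfrac : (s.re / (α.re + δ.re)) / (1 + 2 * (s.re / (α.re + δ.re)))
      = s.re / (α.re + δ.re + 2 * s.re) := by
    have h1 : (1:ℝ) + 2 * (s.re / (α.re + δ.re)) = (α.re + δ.re + 2 * s.re) / (α.re + δ.re) := by
      field_simp
    rw [h1, div_div_eq_mul_div, div_mul_cancel₀ _ hD.ne']
  have hnormsq : Complex.normSq (lam - 1/2) = (lam.re - 1/2)^2 + lam.im^2 := by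
    simp [Complex.normSq_apply, Complex.sub_re, Complex.sub_im]
    norm_num
    ring
  have hmain : Complex.normSq (lam - 1/2) ≤ 1/4 - s.re / (α.re + δ.re + 2 * s.re) := by
    rw [hnormsq]
    have hEq : (1:ℝ)/4 - s.re / (α.re + δ.re + 2 * s.re)
        = ((α.re + δ.re)/4 - s.re/2) / (α.re + δ.re + 2 * s.re) := by
      field_simp
      ring
    rw [hEq, le_div_iff₀ hDr]
    nlinarith [hmono]
  refine ⟨hc0, ?_, ?_⟩
  · rw [hfrac, Complex.norm_def]
    exact Real.sqrt_le_sqrt hmain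
  · have h14 : 1/4 - (s.re / (α.re + δ.re)) / (1 + 2 * (s.re / (α.re + δ.re))) ≤ (1:ℝ)/4 := by
      have h0 : 0 ≤ (s.re / (α.re + δ.re)) / (1 + 2 * (s.re / (α.re + δ.re))) :=
        div_nonneg hc0 (by linarith)
      linarith
    calc Real.sqrt (1/4 - (s.re / (α.re + δ.re)) / (1 + 2 * (s.re / (α.re + δ.re))))
        ≤ Real.sqrt (1/4) := Real.sqrt_le_sqrt h14
      _ = 1/2 := by
          rw [show (1/4:ℝ) = (1/2)^2 by norm_num, Real.sqrt_sq (by norm_num : (0:ℝ) ≤ 1/2)]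
end

section
/- Let A, B ∈ ℝ^{N×N} be monotone matrices and Δ ∈ ℝ^{N×N} symmetric positive definite. Define F_Δ := I + J_{ΔB}(2J_{ΔA} − I) − J_{ΔA} and H_Δ := J_{ΔA}(ΔA + J_{ΔB}(I − ΔA)), where J_M = (I+M)⁻¹. Then F_Δ = (I + ΔA) H_Δ (I + ΔA)⁻¹; in particular F_Δ and H_Δ are similar and have the same eigenvalues. -/
open Matrix

lemma aux_isUnit {N : ℕ} (A Δ : Matrix (Fin N) (Fin N) ℝ)
    (hA : ∀ x : Fin N → ℝ, 0 ≤ A.mulVec x ⬝ᵥ x) (hΔ : Δ.PosDef) :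
    IsUnit (1 + Δ * A) := by
  rw [← Matrix.mulVec_injective_iff_isUnit]
  have hker : ∀ x : Fin N → ℝ, (1 + Δ * A) *ᵥ x = 0 → x = 0 := by
    intro x hx
    have h1 : x + Δ *ᵥ (A *ᵥ x) = 0 := by
      simpa [Matrix.add_mulVec, Matrix.mulVec_mulVec] using hx
    set y := A *ᵥ x with hy
    have hΔy : Δ *ᵥ y = -x := by linear_combination (norm := module) h1
    by_cases hy0 : y = 0
    · have : x = 0 := by
        have := hΔy
        rw [hy0, Matrix.mulVec_zero] at this
        simpa using this.symm
      exact this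
    · exfalso
      have hpos : 0 < y ⬝ᵥ (Δ *ᵥ y) := by
        have := hΔ.dotProduct_mulVec_pos hy0
        simpa [dotProduct] using this
      have hge : 0 ≤ y ⬝ᵥ x := hA x
      rw [show x = -(Δ *ᵥ y) by rw [hΔy]; ring_nf] at hge
      rw [dotProduct_neg] at hge
      linarith
  intro x y hxy
  have : (1 + Δ * A) *ᵥ (x - y) = 0 := by
    rw [Matrix.mulVec_sub, hxy, sub_self]
  have := hker _ this
  linear_combination (norm := module) this

/-- Similarity of the Douglas–Rachford iteration matrix F_Δ and the reduced matrix H_Δ: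
F_Δ = (I + ΔA) H_Δ (I + ΔA)⁻¹; in particular they have the same eigenvalues. -/
theorem stmt15 {N : ℕ} (A B Δ : Matrix (Fin N) (Fin N) ℝ)
    (hA : ∀ x : Fin N → ℝ, 0 ≤ A.mulVec x ⬝ᵥ x)
    (hB : ∀ x : Fin N → ℝ, 0 ≤ B.mulVec x ⬝ᵥ x)
    (hΔ : Δ.PosDef) :
    (let JA := (1 + Δ * A)⁻¹
     let JB := (1 + Δ * B)⁻¹
     let F := 1 + JB * (2 • JA - 1) - JA
     let Hm := JA * (Δ * A + JB * (1 - Δ * A))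
     F = (1 + Δ * A) * Hm * (1 + Δ * A)⁻¹ ∧
     spectrum ℂ (F.map Complex.ofReal) = spectrum ℂ (Hm.map Complex.ofReal)) := by
  intro JA JB F Hm
  set M := 1 + Δ * A with hM
  have hU : IsUnit M := aux_isUnit A Δ hA hΔ
  have hdet : IsUnit M.det := (Matrix.isUnit_iff_isUnit_det M).mp hU
  have hMJA : M * JA = 1 := Matrix.mul_nonsing_inv M hdet
  have hJAM : JA * M = 1 := Matrix.nonsing_inv_mul M hdet
  have key : F * M = M * Hm := by
    have h1 : (2 • JA - 1) * M = 2 - M := by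
      rw [sub_mul, smul_mul_assoc, hJAM, one_mul]
      norm_num
    calc F * M = M + JB * ((2 • JA - 1) * M) - JA * M := by
          simp only [F, add_mul, sub_mul, one_mul, mul_assoc]
      _ = M + JB * (2 - M) - 1 := by rw [h1, hJAM]
      _ = (Δ * A) + JB * (1 - Δ * A) := by simp only [hM]; noncomm_ring
      _ = M * Hm := by
          simp only [Hm, ← mul_assoc, hMJA, one_mul]
  constructor
  · calc F = F * M * JA := by rw [mul_assoc, hMJA, mul_one]
      _ = M * Hm * JA := by rw [key]
  · have hU' : IsUnit (M.map Complex.ofReal) := by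
      have := hU.map (RingHom.mapMatrix (Complex.ofRealHom) :
        Matrix (Fin N) (Fin N) ℝ →+* Matrix (Fin N) (Fin N) ℂ)
      exact this
    obtain ⟨u, hu⟩ := hU'
    have key' : F.map Complex.ofReal * (u : Matrix (Fin N) (Fin N) ℂ) = (u : Matrix (Fin N) (Fin N) ℂ) * Hm.map Complex.ofReal := by
      rw [hu]
      have := congrArg (fun X => X.map (Complex.ofRealHom : ℝ →+* ℂ)) key
      simp only [Matrix.map_mul] at this
      exact this
    have hHm : Hm.map Complex.ofReal = (↑u⁻¹ : Matrix (Fin N) (Fin N) ℂ) * F.map Complex.ofReal * (↑u : Matrix (Fin N) (Fin N) ℂ) := by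
      rw [mul_assoc, key', ← mul_assoc, Units.inv_mul, one_mul]
    rw [hHm, spectrum.units_conjugate']
end

section
/- For λ = x + iy ∈ ℂ and c ≥ 0, if (|λ|² + |λ−1|²)·c ≤ −Re(λ(λ̄ − 1)), then |λ − 1/2|² ≤ 1/4 − c/(1+2c). -/
/-- Algebraic core of the eigenvalue localization: if
(|λ|² + |λ−1|²)·c ≤ −Re(λ(λ̄ − 1)) with c ≥ 0, then |λ − 1/2|² ≤ 1/4 − c/(1+2c). -/
theorem stmt17 (lam : ℂ) (c : ℝ) (hc : 0 ≤ c)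
    (h : (‖lam‖ ^ 2 + ‖lam - 1‖ ^ 2) * c ≤
      -(lam * ((starRingEnd ℂ) lam - 1)).re) :
    ‖lam - 1 / 2‖ ^ 2 ≤ 1 / 4 - c / (1 + 2 * c) := by
  have h1 : (0:ℝ) < 1 + 2 * c := by linarith
  have e1 : ‖lam‖ ^ 2 = lam.re ^ 2 + lam.im ^ 2 := by
    rw [Complex.sq_norm, Complex.normSq_apply]; ring
  have e2 : ‖lam - 1‖ ^ 2 = (lam.re - 1) ^ 2 + lam.im ^ 2 := by
    rw [Complex.sq_norm, Complex.normSq_apply]; simp; ring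
  have e3 : ‖lam - 1 / 2‖ ^ 2 = (lam.re - 1 / 2) ^ 2 + lam.im ^ 2 := by
    rw [Complex.sq_norm, Complex.normSq_apply]; simp; ring
  have e4 : (lam * ((starRingEnd ℂ) lam - 1)).re = lam.re ^ 2 + lam.im ^ 2 - lam.re := by
    simp [Complex.mul_re, Complex.sub_re, Complex.sub_im]; ring
  rw [e1, e2] at h
  rw [e4] at h
  rw [e3]
  rw [show (1:ℝ) / 4 - c / (1 + 2 * c) = ((1 / 4) * (1 + 2 * c) - c) / (1 + 2 * c) by
    field_simp, le_div_iff₀ h1]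
  nlinarith [h]
end

section
/- Let (t_k) be a sequence of positive reals defined by t_{k+1} = [(1 − ω_k) + ω_k · proj_{[a,b]}(r_k)] t_k, where 0 < a ≤ b < ∞, r_k ≥ 0 arbitrary, ω_0 = 1, (ω_k) ∈ (0,1]^ℕ with ∑_k ω_k < ∞, and t_0 > 0. Then (t_k) converges to some t > 0 and ∑_k |t_{k+1} − t_k| < ∞. -/
lemma abs_log_le_aux {ε x : ℝ} (hε : 0 < ε) (hε1 : ε ≤ 1) (hx : ε ≤ x) :
    |Real.log x| ≤ |x - 1| / ε := by
  have hx0 : 0 < x := lt_of_lt_of_le hε hx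
  rcases le_or_gt 1 x with h | h
  · rw [abs_of_nonneg (Real.log_nonneg h), abs_of_nonneg (by linarith),
      le_div_iff₀ hε]
    have h1 := Real.log_le_sub_one_of_pos hx0
    nlinarith [Real.log_nonneg h]
  · rw [abs_of_nonpos (Real.log_nonpos hx0.le h.le), abs_of_neg (by linarith),
      le_div_iff₀ hε]
    have h1 : Real.log x⁻¹ ≤ x⁻¹ - 1 := Real.log_le_sub_one_of_pos (by positivity)
    rw [Real.log_inv] at h1
    have hxinv : x⁻¹ * x = 1 := inv_mul_cancel₀ hx0.ne'
    nlinarith [mul_pos hx0 hε]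

/-- The safeguarded adaptive stepsize sequence
t_{k+1} = [(1 − ω_k) + ω_k proj_{[a,b]}(r_k)] t_k converges to a positive limit
and has summable increments. -/
theorem stmt19 (a b : ℝ) (ha : 0 < a) (hab : a ≤ b)
    (ω : ℕ → ℝ) (hω0 : ω 0 = 1) (hωpos : ∀ k, 0 < ω k) (hωle : ∀ k, ω k ≤ 1)
    (hωsum : Summable ω)
    (r : ℕ → ℝ) (hr : ∀ k, 0 ≤ r k)
    (t : ℕ → ℝ) (ht0 : 0 < t 0)
    (hrec : ∀ k, t (k + 1) = ((1 - ω k) + ω k * min (max (r k) a) b) * t k) :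
    ∃ tl : ℝ, 0 < tl ∧ Filter.Tendsto t Filter.atTop (nhds tl) ∧
      Summable (fun k => |t (k + 1) - t k|) := by
  set m : ℕ → ℝ := fun k => (1 - ω k) + ω k * min (max (r k) a) b with hm
  set ε : ℝ := min 1 a with hεdef
  have hε : 0 < ε := lt_min one_pos ha
  have hε1 : ε ≤ 1 := min_le_left _ _
  set M : ℝ := max (1 - a) (b - 1) with hMdef
  have hM0 : 0 ≤ M := by
    rcases le_total a 1 with h | h
    · exact le_max_of_le_left (by linarith)
    · exact le_max_of_le_right (by linarith)
  -- bounds on c k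
  have hca : ∀ k, a ≤ min (max (r k) a) b := fun k =>
    le_min (le_max_right _ _) hab
  have hcb : ∀ k, min (max (r k) a) b ≤ b := fun k => min_le_right _ _
  have hmlb : ∀ k, ε ≤ m k := by
    intro k
    have h1 := hca k
    have h2 := hωpos k
    have h3 := hωle k
    have h4 : ε ≤ a := min_le_right _ _
    simp only [hm]
    nlinarith
  have hm0 : ∀ k, 0 < m k := fun k => lt_of_lt_of_le hε (hmlb k)
  have hmdiff : ∀ k, |m k - 1| ≤ ω k * M := by
    intro k
    have h1 := hca k
    have h2 := hcb k
    have h3 := (hωpos k).le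
    rw [abs_le]
    constructor
    · have : 1 - a ≤ M := le_max_left _ _
      simp only [hm]; nlinarith
    · have : b - 1 ≤ M := le_max_right _ _
      simp only [hm]; nlinarith
  have htpos : ∀ k, 0 < t k := by
    intro k
    induction k with
    | zero => exact ht0
    | succ n ih => rw [hrec n]; exact mul_pos (hm0 n) ih
  -- summable log
  have hsumlog : Summable (fun k => Real.log (m k)) := by
    apply Summable.of_abs
    apply Summable.of_nonneg_of_le (fun k => abs_nonneg _)
      (fun k => ?_) (hωsum.mul_right (M / ε))
    calc |Real.log (m k)| ≤ |m k - 1| / ε := abs_log_le_aux hε hε1 (hmlb k)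
      _ ≤ (ω k * M) / ε := by gcongr; exact hmdiff k
      _ = ω k * (M / ε) := by ring
  have hlogt : ∀ k, Real.log (t k) = Real.log (t 0) + ∑ j ∈ Finset.range k, Real.log (m j) := by
    intro k
    induction k with
    | zero => simp
    | succ n ih =>
      rw [hrec n, Real.log_mul (hm0 n).ne' (htpos n).ne', Finset.sum_range_succ, ih]
      ring
  obtain ⟨L, hL⟩ := hsumlog
  have hLtends : Filter.Tendsto (fun n => ∑ j ∈ Finset.range n, Real.log (m j))
      Filter.atTop (nhds L) := hL.tendsto_sum_nat
  have hlogtends : Filter.Tendsto (fun k => Real.log (t k)) Filter.atTop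
      (nhds (Real.log (t 0) + L)) := by
    have heq : (fun k => Real.log (t k)) = fun k => Real.log (t 0) + ∑ j ∈ Finset.range k, Real.log (m j) := funext hlogt
    rw [heq]
    exact hLtends.const_add _
  have httends : Filter.Tendsto t Filter.atTop (nhds (Real.exp (Real.log (t 0) + L))) := by
    exact (Real.continuous_exp.continuousAt.tendsto.comp hlogtends).congr
      (fun k => Real.exp_log (htpos k))
  refine ⟨Real.exp (Real.log (t 0) + L), Real.exp_pos _, httends, ?_⟩
  -- bound on t k
  set S : ℝ := ∑' k, |Real.log (m k)| with hSdef
  have habslog : Summable (fun k => |Real.log (m k)|) := summable_abs_iff.2 ⟨L, hL⟩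
  have htbound : ∀ k, t k ≤ Real.exp (Real.log (t 0) + S) := by
    intro k
    have h1 : ∑ j ∈ Finset.range k, Real.log (m j) ≤ S := by
      calc ∑ j ∈ Finset.range k, Real.log (m j)
          ≤ ∑ j ∈ Finset.range k, |Real.log (m j)| :=
            Finset.sum_le_sum (fun j _ => le_abs_self _)
        _ ≤ S := Summable.sum_le_tsum _ (fun j _ => abs_nonneg _) habslog
    calc t k = Real.exp (Real.log (t k)) := (Real.exp_log (htpos k)).symm
      _ ≤ Real.exp (Real.log (t 0) + S) := by
          apply Real.exp_le_exp.2
          rw [hlogt k]; linarith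
  set B := Real.exp (Real.log (t 0) + S) with hBdef
  apply Summable.of_nonneg_of_le (fun k => abs_nonneg _) (fun k => ?_)
    (hωsum.mul_right (M * B))
  have : t (k+1) - t k = (m k - 1) * t k := by rw [hrec k]; ring
  rw [this, abs_mul, abs_of_pos (htpos k)]
  calc |m k - 1| * t k ≤ (ω k * M) * B :=
        mul_le_mul (hmdiff k) (htbound k) (htpos k).le
          (mul_nonneg (hωpos k).le hM0)
    _ = ω k * (M * B) := by ring
end
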